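/- arXiv:hep-th/0303062 — 6 statements merged into one kernel-verified Lean document; each statement's English description precedes it below -/
import Mathlib

section
/- For every n ≥ 1 there exists a unique group homomorphism Dₙ from the symmetric group Sₙ into the group of unitary operators on L²(ℝⁿ, ℂ) such that Dₙ(τᵢ) is the operator (Dₙ(τᵢ)ψ)(θ₁,…,θₙ) = S₂(θ_{i+1}−θᵢ)·ψ(θ₁,…,θ_{i−1},θ_{i+1},θᵢ,θ_{i+2},…,θₙ) for each transposition τᵢ = (i, i+1), 1 ≤ i ≤ n−1. In particular each Dₙ(τᵢ) is unitary and satisfies Dₙ(τᵢ)² = 1, Dₙ(τᵢ)Dₙ(τⱼ) = Dₙ(τⱼ)Dₙ(τᵢ) for |i−j| > 1, and the braid relation Dₙ(τᵢ)Dₙ(τᵢ₊₁)Dₙ(τᵢ) = Dₙ(τᵢ₊₁)Dₙ(τᵢ)Dₙ(τᵢ₊₁) for 1 ≤ i ≤ n−2. -/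
open MeasureTheory Complex

noncomputable section

/-- The `n`-fold L² space over rapidity variables. -/
abbrev Hsp (n : ℕ) : Type := Lp ℂ 2 (volume : Measure (Fin n → ℝ))

/-- The transposition τᵢ = (i, i+1) (0-based) in the symmetric group Sₙ. -/
def tau (n i : ℕ) (h : i + 1 < n) : Equiv.Perm (Fin n) :=
  Equiv.swap ⟨i, Nat.lt_of_succ_lt h⟩ ⟨i + 1, h⟩

/-- `D` is the S₂-twisted representation of Sₙ on L²(ℝⁿ) determined on the
transpositions τᵢ by `(D(τᵢ)ψ)(θ) = S₂(θ_{i+1} − θ_i)·ψ(θ ∘ τᵢ)`. -/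
def IsZamoRep (S₂ : ℝ → ℂ) (n : ℕ)
    (D : Equiv.Perm (Fin n) →* unitary (Hsp n →L[ℂ] Hsp n)) : Prop :=
  ∀ (i : ℕ) (hi : i + 1 < n) (ψ : Hsp n),
    ∀ᵐ θ ∂(volume : Measure (Fin n → ℝ)),
      ((D (tau n i hi) : Hsp n →L[ℂ] Hsp n) ψ) θ
        = S₂ (θ ⟨i + 1, hi⟩ - θ ⟨i, Nat.lt_of_succ_lt hi⟩)
            * ψ (fun m => θ (tau n i hi m))

namespace ZamoAux

open Equiv Finset

variable (S₂ : ℝ → ℂ) (n : ℕ)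

/-- The finite set of strictly increasing pairs of indices. -/
def pairs : Finset (Fin n × Fin n) := Finset.univ.filter fun p => p.1 < p.2

/-- The multiplicative cocycle over inversions. -/
def coc (σ : Equiv.Perm (Fin n)) (θ : Fin n → ℝ) : ℂ :=
  ∏ p ∈ pairs n, if σ p.2 < σ p.1 then S₂ (θ (σ p.1) - θ (σ p.2)) else 1

variable {n}

lemma norm_coc (habs : ∀ x : ℝ, ‖S₂ x‖ = 1) (σ : Equiv.Perm (Fin n))
    (θ : Fin n → ℝ) : ‖coc S₂ n σ θ‖ = 1 := by
  rw [coc, norm_prod]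
  refine Finset.prod_eq_one fun p _ => ?_
  split
  · simp [habs]
  · simp

lemma measurable_coc (hm : Measurable S₂) (σ : Equiv.Perm (Fin n)) :
    Measurable (coc S₂ n σ) := by
  refine Finset.measurable_prod _ fun p _ => ?_
  by_cases h : σ p.2 < σ p.1
  · have : Measurable fun θ : Fin n → ℝ => S₂ (θ (σ p.1) - θ (σ p.2)) :=
      hm.comp ((measurable_pi_apply (σ p.1)).sub (measurable_pi_apply (σ p.2)))
    simpa [h] using this
  · simp [h]

lemma coc_one (θ : Fin n → ℝ) : coc S₂ n 1 θ = 1 := by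
  refine Finset.prod_eq_one fun p hp => ?_
  have hp' : p.1 < p.2 := by simpa [pairs] using hp
  simp [not_lt_of_gt hp', hp'.asymm]

/-- Sort the image of a pair under a permutation. -/
def sp (τ : Equiv.Perm (Fin n)) (p : Fin n × Fin n) : Fin n × Fin n :=
  if τ p.1 < τ p.2 then (τ p.1, τ p.2) else (τ p.2, τ p.1)

lemma sp_mem (τ : Equiv.Perm (Fin n)) {p : Fin n × Fin n} (hp : p ∈ pairs n) :
    sp τ p ∈ pairs n := by
  have hp' : p.1 < p.2 := by simpa [pairs] using hp
  have hne : τ p.1 ≠ τ p.2 := fun h => absurd (τ.injective h) hp'.ne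
  rw [sp]
  split_ifs with h
  · simpa [pairs] using h
  · simpa [pairs] using lt_of_le_of_ne (not_lt.mp h) (Ne.symm hne)

lemma sp_sp (τ : Equiv.Perm (Fin n)) {p : Fin n × Fin n} (hp : p ∈ pairs n) :
    sp τ⁻¹ (sp τ p) = p := by
  have hp' : p.1 < p.2 := by simpa [pairs] using hp
  by_cases h : τ p.1 < τ p.2
  · simp [sp, h, hp', Equiv.Perm.inv_def, Equiv.symm_apply_apply]
  · simp [sp, h, hp', hp'.asymm, Equiv.Perm.inv_def, Equiv.symm_apply_apply]

lemma coc_mul (habs : ∀ x : ℝ, ‖S₂ x‖ = 1)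
    (hsym : ∀ x : ℝ, S₂ (-x) = (starRingEnd ℂ) (S₂ x))
    (σ τ : Equiv.Perm (Fin n)) (θ : Fin n → ℝ) :
    coc S₂ n (σ * τ) θ = coc S₂ n σ θ * coc S₂ n τ (fun i => θ (σ i)) := by
  have key : ∀ x : ℝ, S₂ x * S₂ (-x) = 1 := by
    intro x
    rw [hsym, Complex.mul_conj]
    norm_cast
    simp [Complex.normSq_eq_norm_sq, habs]
  have h1 : coc S₂ n σ θ = ∏ p ∈ pairs n,
      (if σ (sp τ p).2 < σ (sp τ p).1 then S₂ (θ (σ (sp τ p).1) - θ (σ (sp τ p).2)) else 1) := by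
    rw [coc]
    refine Finset.prod_nbij' (sp τ⁻¹) (sp τ) (fun a ha => sp_mem _ ha) (fun a ha => sp_mem _ ha)
      (fun a ha => by simpa using sp_sp τ⁻¹ ha) (fun a ha => sp_sp τ ha) (fun a ha => ?_)
    have h2 : sp τ (sp τ⁻¹ a) = a := by simpa using sp_sp τ⁻¹ ha
    rw [h2]
  rw [h1, coc, coc, ← Finset.prod_mul_distrib]
  refine Finset.prod_congr rfl fun p hp => ?_
  have hp' : p.1 < p.2 := by simpa [pairs] using hp
  have hne : τ p.1 ≠ τ p.2 := fun h => absurd (τ.injective h) hp'.ne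
  rw [Equiv.Perm.mul_apply, Equiv.Perm.mul_apply]
  simp only [sp]
  rcases lt_or_gt_of_ne hne with h | h
  · simp only [if_pos h, if_neg (asymm h), mul_one]
  · simp only [if_neg (asymm h), if_pos h]
    have hne2 : σ (τ p.1) ≠ σ (τ p.2) := fun h2 => absurd (σ.injective h2) hne
    rcases lt_or_gt_of_ne hne2 with h2 | h2
    · simp only [if_neg (asymm h2), if_pos h2]
      have : θ (σ (τ p.1)) - θ (σ (τ p.2)) = -(θ (σ (τ p.2)) - θ (σ (τ p.1))) := by ring
      rw [this, key]
    · simp only [if_pos h2, if_neg (asymm h2), one_mul]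


lemma mp_perm (σ : Equiv.Perm (Fin n)) :
    MeasurePreserving (fun θ : Fin n → ℝ => fun i => θ (σ i))
      (volume : Measure (Fin n → ℝ)) volume := by
  have h := (volume_measurePreserving_piCongrLeft (fun _ : Fin n => ℝ) σ).symm
  have he : (fun θ : Fin n → ℝ => fun i => θ (σ i))
      = ⇑(MeasurableEquiv.piCongrLeft (fun _ : Fin n => ℝ) σ).symm := by
    funext θ
    funext i
    rfl
  rw [he]
  exact h

lemma eLpNorm_coc_eq (habs : ∀ x : ℝ, ‖S₂ x‖ = 1) (σ : Equiv.Perm (Fin n))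
    (ψ : Hsp n) :
    eLpNorm (fun θ : Fin n → ℝ => coc S₂ n σ θ * ψ (fun i => θ (σ i))) 2
        (volume : Measure (Fin n → ℝ))
      = eLpNorm (⇑ψ) 2 (volume : Measure (Fin n → ℝ)) := by
  have heq : eLpNorm (fun θ : Fin n → ℝ => coc S₂ n σ θ * ψ (fun i => θ (σ i))) 2
      (volume : Measure (Fin n → ℝ))
      = eLpNorm (fun θ : Fin n → ℝ => ψ (fun i => θ (σ i))) 2 volume :=
    eLpNorm_congr_norm_ae (Filter.Eventually.of_forall fun θ => by
      rw [norm_mul, norm_coc S₂ habs, one_mul])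
  rw [heq,
    show (fun θ : Fin n → ℝ => ψ (fun i => θ (σ i)))
        = (⇑ψ ∘ fun θ : Fin n → ℝ => fun i => θ (σ i)) from rfl,
    eLpNorm_comp_measurePreserving (Lp.aestronglyMeasurable ψ) (mp_perm σ)]

lemma memℒp_coc (hm : Measurable S₂) (habs : ∀ x : ℝ, ‖S₂ x‖ = 1)
    (σ : Equiv.Perm (Fin n)) (ψ : Hsp n) :
    MemLp (fun θ : Fin n → ℝ => coc S₂ n σ θ * ψ (fun i => θ (σ i))) 2
      (volume : Measure (Fin n → ℝ)) := by
  have hcomp : AEStronglyMeasurable (fun θ : Fin n → ℝ => ψ (fun i => θ (σ i))) volume :=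
    (Lp.aestronglyMeasurable ψ).comp_quasiMeasurePreserving
      (mp_perm σ).quasiMeasurePreserving
  refine ⟨((measurable_coc S₂ hm σ).aestronglyMeasurable).mul hcomp, ?_⟩
  rw [eLpNorm_coc_eq S₂ habs σ ψ]
  exact (Lp.memLp ψ).2

variable (hm : Measurable S₂) (habs : ∀ x : ℝ, ‖S₂ x‖ = 1)

/-- The twisted substitution operator, as a linear isometry. -/
def Uli (σ : Equiv.Perm (Fin n)) : Hsp n →ₗᵢ[ℂ] Hsp n where
  toFun ψ := (memℒp_coc S₂ hm habs σ ψ).toLp _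
  map_add' ψ φ := by
    apply Lp.ext
    have hq := (mp_perm (n := n) σ).quasiMeasurePreserving
    filter_upwards [MemLp.coeFn_toLp (memℒp_coc S₂ hm habs σ (ψ + φ)),
      MemLp.coeFn_toLp (memℒp_coc S₂ hm habs σ ψ),
      MemLp.coeFn_toLp (memℒp_coc S₂ hm habs σ φ),
      Lp.coeFn_add ((memℒp_coc S₂ hm habs σ ψ).toLp _) ((memℒp_coc S₂ hm habs σ φ).toLp _),
      hq.ae_eq_comp (Lp.coeFn_add ψ φ)] with θ e1 e2 e3 e4 e5
    rw [e1, e4]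
    simp only [Pi.add_apply]
    rw [e2, e3]
    have h5 : (⇑(ψ + φ)) (fun i => θ (σ i)) = ψ (fun i => θ (σ i)) + φ (fun i => θ (σ i)) := by
      simpa using e5
    rw [h5]
    ring
  map_smul' c ψ := by
    apply Lp.ext
    have hq := (mp_perm (n := n) σ).quasiMeasurePreserving
    filter_upwards [MemLp.coeFn_toLp (memℒp_coc S₂ hm habs σ (c • ψ)),
      MemLp.coeFn_toLp (memℒp_coc S₂ hm habs σ ψ),
      Lp.coeFn_smul c ((memℒp_coc S₂ hm habs σ ψ).toLp _),
      hq.ae_eq_comp (Lp.coeFn_smul c ψ)] with θ e1 e2 e3 e4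
    rw [e1]
    simp only [RingHom.id_apply]
    rw [e3]
    simp only [Pi.smul_apply, smul_eq_mul]
    rw [e2]
    have h4 : (⇑(c • ψ)) (fun i => θ (σ i)) = c * ψ (fun i => θ (σ i)) := by
      simpa using e4
    rw [h4]
    ring
  norm_map' ψ := by
    show ‖MemLp.toLp _ (memℒp_coc S₂ hm habs σ ψ)‖ = ‖ψ‖
    rw [Lp.norm_toLp, eLpNorm_coc_eq S₂ habs σ ψ, ← Lp.norm_def]

lemma coeFn_Uli (σ : Equiv.Perm (Fin n)) (ψ : Hsp n) :
    ⇑(Uli S₂ hm habs σ ψ)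
      =ᵐ[(volume : Measure (Fin n → ℝ))]
        fun θ => coc S₂ n σ θ * ψ (fun i => θ (σ i)) :=
  MemLp.coeFn_toLp (memℒp_coc S₂ hm habs σ ψ)

variable (hsym : ∀ x : ℝ, S₂ (-x) = (starRingEnd ℂ) (S₂ x)) (n)

/-- The representation, with values in continuous linear maps. -/
def Dmodel : Equiv.Perm (Fin n) →* (Hsp n →L[ℂ] Hsp n) where
  toFun σ := (Uli S₂ hm habs σ).toContinuousLinearMap
  map_one' := by
    ext ψ
    filter_upwards [coeFn_Uli S₂ hm habs 1 ψ] with θ e1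
    simpa [coc_one, ContinuousLinearMap.one_apply] using e1
  map_mul' σ τ := by
    ext ψ
    have hq := (mp_perm (n := n) σ).quasiMeasurePreserving
    filter_upwards [coeFn_Uli S₂ hm habs (σ * τ) ψ,
      coeFn_Uli S₂ hm habs σ (Uli S₂ hm habs τ ψ),
      hq.ae_eq_comp (coeFn_Uli S₂ hm habs τ ψ)] with θ e1 e2 e3
    simp only [LinearIsometry.coe_toContinuousLinearMap, ContinuousLinearMap.mul_apply]
    rw [e1, e2]
    have h3 : (⇑(Uli S₂ hm habs τ ψ)) (fun i => θ (σ i))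
        = coc S₂ n τ (fun i => θ (σ i)) * ψ (fun m => θ (σ (τ m))) := by
      simpa using e3
    rw [h3, coc_mul S₂ habs hsym σ τ θ]
    simp only [Equiv.Perm.mul_apply]
    ring

lemma Dmodel_mem_unitary (σ : Equiv.Perm (Fin n)) :
    Dmodel S₂ n hm habs hsym σ ∈ unitary (Hsp n →L[ℂ] Hsp n) := by
  set T := Dmodel S₂ n hm habs hsym σ with hT
  have hadj : ContinuousLinearMap.adjoint T ∘L T = 1 :=
    (ContinuousLinearMap.norm_map_iff_adjoint_comp_self T).mp
      (fun ψ => (Uli S₂ hm habs σ).norm_map ψ)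
  have hstar : star T * T = 1 := by
    rw [ContinuousLinearMap.mul_def, ContinuousLinearMap.star_eq_adjoint]
    exact hadj
  have hinv : T * Dmodel S₂ n hm habs hsym σ⁻¹ = 1 := by
    rw [hT, ← map_mul, mul_inv_cancel, map_one]
  have hstar_eq : star T = Dmodel S₂ n hm habs hsym σ⁻¹ := by
    calc star T = star T * (T * Dmodel S₂ n hm habs hsym σ⁻¹) := by rw [hinv, mul_one]
    _ = (star T * T) * Dmodel S₂ n hm habs hsym σ⁻¹ := by rw [mul_assoc]
    _ = Dmodel S₂ n hm habs hsym σ⁻¹ := by rw [hstar, one_mul]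
  exact Unitary.mem_iff.mpr ⟨hstar, by rw [hstar_eq]; exact hinv⟩

/-- The representation, with values in the unitary group. -/
def Dfull : Equiv.Perm (Fin n) →* unitary (Hsp n →L[ℂ] Hsp n) :=
  (Dmodel S₂ n hm habs hsym).codRestrict (unitary (Hsp n →L[ℂ] Hsp n))
    (Dmodel_mem_unitary S₂ n hm habs hsym)

variable {n}

lemma coc_tau (i : ℕ) (hi : i + 1 < n) (θ : Fin n → ℝ) :
    coc S₂ n (tau n i hi) θ
      = S₂ (θ ⟨i + 1, hi⟩ - θ ⟨i, Nat.lt_of_succ_lt hi⟩) := by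
  set a : Fin n := ⟨i, Nat.lt_of_succ_lt hi⟩ with ha
  set b : Fin n := ⟨i + 1, hi⟩ with hb
  have hab : a < b := by simp [ha, hb, Fin.lt_def]
  rw [coc, Finset.prod_eq_single (a, b)]
  · rw [tau, if_pos]
    · rw [Equiv.swap_apply_left, Equiv.swap_apply_right]
    · rw [Equiv.swap_apply_left, Equiv.swap_apply_right]
      exact hab
  · intro p hp hne
    have hp' : p.1 < p.2 := by simpa [pairs] using hp
    rw [if_neg]
    rw [tau]
    simp only [Equiv.swap_apply_def]
    have hne' : ¬(p.1 = a ∧ p.2 = b) := by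
      intro hc
      exact hne (by rw [← hc.1, ← hc.2])
    have h1 := hp'
    rw [Fin.lt_def] at h1
    split_ifs with c1 c2 c3 c4 c5 c6 c7 c8 <;>
      simp only [Fin.lt_def, not_lt] <;>
      first
        | (exfalso; exact hne' ⟨c3, c1⟩)
        | ((simp_all [Fin.ext_iff, ha, hb]) <;> omega)
  · intro hnotmem
    exfalso
    exact hnotmem (by simp [pairs, hab])


lemma isZamo_Dfull : IsZamoRep S₂ n (Dfull S₂ n hm habs hsym) := by
  intro i hi ψ
  filter_upwards [coeFn_Uli S₂ hm habs (tau n i hi) ψ] with θ e1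
  rw [show ((Dfull S₂ n hm habs hsym (tau n i hi) : Hsp n →L[ℂ] Hsp n) ψ)
      = Uli S₂ hm habs (tau n i hi) ψ from rfl, e1, coc_tau S₂ i hi θ]

lemma tau_comm {n : ℕ} (i j : ℕ) (hi : i + 1 < n) (hj : j + 1 < n)
    (h : i + 1 < j ∨ j + 1 < i) :
    tau n i hi * tau n j hj = tau n j hj * tau n i hi := by
  set a : Fin n := ⟨i, Nat.lt_of_succ_lt hi⟩ with ha
  set b : Fin n := ⟨i + 1, hi⟩ with hb
  set c : Fin n := ⟨j, Nat.lt_of_succ_lt hj⟩ with hc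
  set d : Fin n := ⟨j + 1, hj⟩ with hd
  have hca : c ≠ a := by simp only [ha, hc, ne_eq, Fin.mk.injEq]; omega
  have hcb : c ≠ b := by simp only [hb, hc, ne_eq, Fin.mk.injEq]; omega
  have hda : d ≠ a := by simp only [ha, hd, ne_eq, Fin.mk.injEq]; omega
  have hdb : d ≠ b := by simp only [hb, hd, ne_eq, Fin.mk.injEq]; omega
  have h1 : Equiv.swap a b * Equiv.swap c d * (Equiv.swap a b)⁻¹ = Equiv.swap c d := by
    rw [← Equiv.swap_apply_apply, Equiv.swap_apply_of_ne_of_ne hca hcb,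
      Equiv.swap_apply_of_ne_of_ne hda hdb]
  show Equiv.swap a b * Equiv.swap c d = Equiv.swap c d * Equiv.swap a b
  conv_rhs => rw [← h1]
  rw [inv_mul_cancel_right]

lemma tau_braid {n : ℕ} (i : ℕ) (hi : i + 2 < n) :
    tau n i (Nat.lt_of_succ_lt hi) * tau n (i + 1) hi * tau n i (Nat.lt_of_succ_lt hi)
      = tau n (i + 1) hi * tau n i (Nat.lt_of_succ_lt hi) * tau n (i + 1) hi := by
  set a : Fin n := ⟨i, Nat.lt_of_succ_lt (Nat.lt_of_succ_lt hi)⟩ with ha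
  set b : Fin n := ⟨i + 1, Nat.lt_of_succ_lt hi⟩ with hb
  set c : Fin n := ⟨i + 2, hi⟩ with hc
  have hab : a ≠ b := by simp only [ha, hb, ne_eq, Fin.mk.injEq]; omega
  have hac : a ≠ c := by simp only [ha, hc, ne_eq, Fin.mk.injEq]; omega
  have hca : c ≠ a := hac.symm
  have hcb : c ≠ b := by simp only [hb, hc, ne_eq, Fin.mk.injEq]; omega
  show Equiv.swap a b * Equiv.swap b c * Equiv.swap a b
      = Equiv.swap b c * Equiv.swap a b * Equiv.swap b c
  have hL : Equiv.swap a b * Equiv.swap b c * Equiv.swap a b = Equiv.swap a c := by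
    rw [Equiv.swap_comm a b, Equiv.swap_comm b c]
    exact Equiv.swap_mul_swap_mul_swap hcb hca
  have hR : Equiv.swap b c * Equiv.swap a b * Equiv.swap b c = Equiv.swap c a :=
    Equiv.swap_mul_swap_mul_swap hab hac
  rw [hL, hR, Equiv.swap_comm]

end ZamoAux

lemma zamo_unique {S₂ : ℝ → ℂ} {n : ℕ} (hn : 1 ≤ n)
    {D D' : Equiv.Perm (Fin n) →* unitary (Hsp n →L[ℂ] Hsp n)}
    (hD : IsZamoRep S₂ n D) (hD' : IsZamoRep S₂ n D') : D = D' := by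
  obtain ⟨m, rfl⟩ : ∃ m, n = m + 1 := ⟨n - 1, by omega⟩
  refine MonoidHom.eq_of_eqOn_denseM (Equiv.Perm.mclosure_swap_castSucc_succ m) ?_
  rintro x ⟨i, rfl⟩
  have hi : (i : ℕ) + 1 < m + 1 := Nat.succ_lt_succ i.isLt
  have hx : Equiv.swap i.castSucc i.succ = tau (m + 1) i hi := by
    rw [tau]
    congr 1 <;> exact Fin.ext (by simp)
  show D (Equiv.swap i.castSucc i.succ) = D' (Equiv.swap i.castSucc i.succ)
  rw [hx]
  apply Subtype.ext
  ext ψ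
  filter_upwards [hD i hi ψ, hD' i hi ψ] with θ h1 h2
  rw [h1, h2]

/-- For every n ≥ 1 there is a unique group homomorphism Dₙ from Sₙ to
the unitary operators on L²(ℝⁿ) with `(Dₙ(τᵢ)ψ)(θ) = S₂(θ_{i+1}−θᵢ)·ψ(θ∘τᵢ)` on the
transpositions τᵢ = (i,i+1); in particular each Dₙ(τᵢ) is unitary and the relations
Dₙ(τᵢ)² = 1, commutation for |i−j| > 1, and the braid relation hold. -/
theorem statement0 (S₂ : ℝ → ℂ) (hS₂meas : Measurable S₂)
    (hS₂abs : ∀ θ : ℝ, ‖S₂ θ‖ = 1)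
    (hS₂sym : ∀ θ : ℝ, S₂ (-θ) = starRingEnd ℂ (S₂ θ))
    (n : ℕ) (hn : 1 ≤ n) :
    (∃! D : Equiv.Perm (Fin n) →* unitary (Hsp n →L[ℂ] Hsp n), IsZamoRep S₂ n D) ∧
    (∀ D : Equiv.Perm (Fin n) →* unitary (Hsp n →L[ℂ] Hsp n), IsZamoRep S₂ n D →
      (∀ (i : ℕ) (hi : i + 1 < n), D (tau n i hi) * D (tau n i hi) = 1) ∧
      (∀ (i j : ℕ) (hi : i + 1 < n) (hj : j + 1 < n), (i + 1 < j ∨ j + 1 < i) →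
        D (tau n i hi) * D (tau n j hj) = D (tau n j hj) * D (tau n i hi)) ∧
      (∀ (i : ℕ) (hi : i + 2 < n),
        D (tau n i (Nat.lt_of_succ_lt hi)) * D (tau n (i+1) hi) *
            D (tau n i (Nat.lt_of_succ_lt hi))
          = D (tau n (i+1) hi) * D (tau n i (Nat.lt_of_succ_lt hi)) *
              D (tau n (i+1) hi))) := by
  constructor
  · exact ⟨ZamoAux.Dfull (S₂ := S₂) (n := n) (hm := hS₂meas) (habs := hS₂abs) (hsym := hS₂sym),
      ZamoAux.isZamo_Dfull (S₂ := S₂) (n := n) (hm := hS₂meas) (habs := hS₂abs) (hsym := hS₂sym),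
      fun D' hD' => zamo_unique hn hD'
        (ZamoAux.isZamo_Dfull (S₂ := S₂) (n := n) (hm := hS₂meas) (habs := hS₂abs) (hsym := hS₂sym))⟩
  · intro D _
    refine ⟨fun i hi => ?_, fun i j hi hj hij => ?_, fun i hi => ?_⟩
    · rw [← map_mul, tau, Equiv.swap_mul_self, map_one]
    · rw [← map_mul, ← map_mul, ZamoAux.tau_comm i j hi hj hij]
    · rw [← map_mul, ← map_mul, ← map_mul, ← map_mul, ZamoAux.tau_braid i hi]

end
end

section
/- The annihilation operator maps symmetrized vectors to symmetrized vectors: if ψ ∈ L²(ℝⁿ, ℂ) satisfies Pₙψ = ψ and φ ∈ L²(ℝ, ℂ), then the function a(φ)ψ ∈ L²(ℝ^{n−1}, ℂ) defined by (a(φ)ψ)(θ₁,…,θ_{n−1}) = √n·∫_ℝ φ(θ₀)·ψ(θ₀,θ₁,…,θ_{n−1}) dθ₀ satisfies P_{n−1}(a(φ)ψ) = a(φ)ψ. More generally, a(φ)∘(1⊗D_{n−1}(π)) = D_{n−1}(π)∘a(φ) for every π ∈ S_{n−1}, where (1⊗D_{n−1}(π)) acts as D_{n−1}(π) in the last n−1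 variables of L²(ℝⁿ). -/
open MeasureTheory Complex

noncomputable section

/-- The symmetrization Pₙ = (1/n!)·Σ_{π ∈ Sₙ} Dₙ(π). -/
def symProj {n : ℕ}
    (D : Equiv.Perm (Fin n) →* unitary (Hsp n →L[ℂ] Hsp n)) :
    Hsp n →L[ℂ] Hsp n :=
  (n.factorial : ℂ)⁻¹ • ∑ π : Equiv.Perm (Fin n), (D π : Hsp n →L[ℂ] Hsp n)

/-- The embedding Sₙ ↪ S_{n+1} fixing the first point, ρ ↦ 1 ⊗ ρ. -/
def embedSucc (n : ℕ) (ρ : Equiv.Perm (Fin n)) : Equiv.Perm (Fin (n + 1)) :=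
  (finSuccEquiv n).trans ((Equiv.optionCongr ρ).trans (finSuccEquiv n).symm)

/-! ### Auxiliary measure-theoretic lemmas -/

/-- The measurable equivalence `(θ, t) ↦ Fin.cons t θ`. -/
def consE (n : ℕ) : ((Fin n → ℝ) × ℝ) ≃ᵐ (Fin (n+1) → ℝ) :=
  (MeasurableEquiv.prodComm : ((Fin n → ℝ) × ℝ) ≃ᵐ (ℝ × (Fin n → ℝ))).trans
    (MeasurableEquiv.piFinSuccAbove (fun _ : Fin (n+1) => ℝ) 0).symm

lemma consE_apply (n : ℕ) (p : (Fin n → ℝ) × ℝ) : consE n p = Fin.cons p.2 p.1 := by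
  simp [consE, MeasurableEquiv.piFinSuccAbove, MeasurableEquiv.prodComm, Equiv.prodComm,
    Fin.insertNthEquiv, Fin.insertNth_zero']

lemma mp_consE (n : ℕ) :
    MeasurePreserving (consE n)
      ((volume : Measure (Fin n → ℝ)).prod (volume : Measure ℝ)) volume := by
  have h := (MeasureTheory.volume_preserving_piFinSuccAbove (fun _ : Fin (n+1) => ℝ) 0).symm
  exact h.comp MeasureTheory.Measure.measurePreserving_swap

lemma mp_comp_perm (n : ℕ) (π : Equiv.Perm (Fin n)) :
    MeasurePreserving (fun θ : Fin n → ℝ => θ ∘ π)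
      (volume : Measure (Fin n → ℝ)) volume := by
  have h := MeasureTheory.volume_measurePreserving_piCongrLeft (fun _ : Fin n => ℝ) π.symm
  have he : ⇑(MeasurableEquiv.piCongrLeft (fun _ : Fin n => ℝ) π.symm)
      = fun θ : Fin n → ℝ => θ ∘ π := by
    funext θ
    funext i
    show (Equiv.piCongrLeft (fun _ : Fin n => ℝ) π.symm) θ i = θ (π i)
    rw [Equiv.piCongrLeft_apply_eq_cast]
    rfl
  rw [he] at h
  exact h

lemma ae_slice {n : ℕ} {u v : (Fin (n+1) → ℝ) → ℂ}
    (h : u =ᵐ[(volume : Measure (Fin (n+1) → ℝ))] v) :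
    ∀ᵐ θ ∂(volume : Measure (Fin n → ℝ)), ∀ᵐ t ∂(volume : Measure ℝ),
      u (Fin.cons t θ) = v (Fin.cons t θ) := by
  have h2 : ∀ᵐ p ∂((volume : Measure (Fin n → ℝ)).prod (volume : Measure ℝ)),
      u (Fin.cons p.2 p.1) = v (Fin.cons p.2 p.1) := by
    have := (mp_consE n).quasiMeasurePreserving.ae h
    filter_upwards [this] with p hp
    rwa [consE_apply] at hp
  exact Measure.ae_ae_of_ae_prod h2

/-! ### The annihilation operator -/

lemma memLp_key (n : ℕ) (φ : Lp ℂ 2 (volume : Measure ℝ)) (u : (Fin (n+1) → ℝ) → ℂ)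
    (hu : MemLp u 2 (volume : Measure (Fin (n+1) → ℝ))) :
    MemLp (fun θ : Fin n → ℝ => ∫ t : ℝ, φ t * u (Fin.cons t θ)) 2
      (volume : Measure (Fin n → ℝ)) := by
  set μ := ((volume : Measure (Fin n → ℝ)).prod (volume : Measure ℝ))
  have hmp := mp_consE n
  have hemb := (consE n).measurableEmbedding
  have hU : AEStronglyMeasurable (fun p : (Fin n → ℝ) × ℝ => u (Fin.cons p.2 p.1)) μ := by
    have := (hmp.aestronglyMeasurable_comp_iff hemb).2 hu.aestronglyMeasurable
    simpa only [Function.comp_def, consE_apply] using this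
  have hφm : AEStronglyMeasurable (fun p : (Fin n → ℝ) × ℝ => φ p.2) μ :=
    (Lp.aestronglyMeasurable φ).comp_quasiMeasurePreserving Measure.quasiMeasurePreserving_snd
  have hF : AEStronglyMeasurable (fun p : (Fin n → ℝ) × ℝ => φ p.2 * u (Fin.cons p.2 p.1)) μ :=
    hφm.mul hU
  have hfm : AEStronglyMeasurable (fun θ : Fin n → ℝ => ∫ t : ℝ, φ t * u (Fin.cons t θ))
      (volume : Measure (Fin n → ℝ)) := hF.integral_prod_right'
  have huSq : Integrable (fun x : Fin (n+1) → ℝ => ‖u x‖ ^ (2:ℝ)) volume := by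
    simpa using hu.integrable_norm_rpow (by norm_num) (by norm_num)
  have hG : Integrable (fun p : (Fin n → ℝ) × ℝ => ‖u (Fin.cons p.2 p.1)‖ ^ (2:ℝ)) μ := by
    have := (hmp.integrable_comp_emb hemb).2 huSq
    simpa only [Function.comp_def, consE_apply] using this
  have hH : Integrable (fun θ : Fin n → ℝ => ∫ t : ℝ, ‖u (Fin.cons t θ)‖ ^ (2:ℝ))
      (volume : Measure (Fin n → ℝ)) := hG.integral_prod_left
  set w : ℝ := (∫ t : ℝ, ‖φ t‖ ^ (2:ℝ)) ^ ((1:ℝ)/2) with hw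
  set H : (Fin n → ℝ) → ℝ := fun θ => ∫ t : ℝ, ‖u (Fin.cons t θ)‖ ^ (2:ℝ) with hHdef
  have hHnn : ∀ θ, 0 ≤ H θ := fun θ => integral_nonneg fun t => Real.rpow_nonneg (norm_nonneg _) _
  have hHm : AEStronglyMeasurable H (volume : Measure (Fin n → ℝ)) := by
    have : AEStronglyMeasurable (fun p : (Fin n → ℝ) × ℝ => ‖u (Fin.cons p.2 p.1)‖ ^ (2:ℝ)) μ :=
      (Real.continuous_rpow_const (by norm_num)).comp_aestronglyMeasurable hU.norm
    exact this.integral_prod_right'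
  have hg2 : MemLp (fun θ => w * (H θ) ^ ((1:ℝ)/2)) 2 (volume : Measure (Fin n → ℝ)) := by
    have hgm : AEStronglyMeasurable (fun θ => w * (H θ) ^ ((1:ℝ)/2))
        (volume : Measure (Fin n → ℝ)) :=
      aestronglyMeasurable_const.mul
        ((Real.continuous_rpow_const (by norm_num)).comp_aestronglyMeasurable hHm)
    rw [memLp_two_iff_integrable_sq hgm]
    have : (fun θ => (w * (H θ) ^ ((1:ℝ)/2)) ^ 2) = fun θ => w ^ 2 * H θ := by
      funext θ
      rw [mul_pow, ← Real.rpow_natCast ((H θ) ^ ((1:ℝ)/2)) 2, ← Real.rpow_mul (hHnn θ)]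
      norm_num
    rw [this]
    exact hH.const_mul _
  refine hg2.of_le hfm ?_
  have hslm := hU.prodMk_left
  have hsli := hG.prod_right_ae
  filter_upwards [hslm, hsli] with θ hθm hθi
  have hpq : (2:ℝ).HolderConjugate 2 := Real.holderConjugate_iff.mpr ⟨by norm_num, by norm_num⟩
  have hφ2 : MemLp (fun t => φ t) (ENNReal.ofReal 2) (volume : Measure ℝ) := by
    simpa [ENNReal.ofReal_ofNat] using Lp.memLp φ
  have hsl2 : MemLp (fun t => u (Fin.cons t θ)) (ENNReal.ofReal 2) (volume : Measure ℝ) := by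
    rw [show ENNReal.ofReal 2 = 2 by simp [ENNReal.ofReal_ofNat]]
    rw [memLp_two_iff_integrable_sq_norm hθm]
    simpa [Real.rpow_natCast] using hθi
  calc ‖∫ t : ℝ, φ t * u (Fin.cons t θ)‖
      ≤ ∫ t : ℝ, ‖φ t * u (Fin.cons t θ)‖ := norm_integral_le_integral_norm _
    _ = ∫ t : ℝ, ‖φ t‖ * ‖u (Fin.cons t θ)‖ := by simp [norm_mul]
    _ ≤ (∫ t : ℝ, ‖φ t‖ ^ (2:ℝ)) ^ ((1:ℝ)/2) * (∫ t : ℝ, ‖u (Fin.cons t θ)‖ ^ (2:ℝ)) ^ ((1:ℝ)/2) :=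
        MeasureTheory.integral_mul_norm_le_Lp_mul_Lq hpq hφ2 hsl2
    _ = w * (H θ) ^ ((1:ℝ)/2) := rfl
    _ ≤ ‖w * (H θ) ^ ((1:ℝ)/2)‖ := le_abs_self _

/-- The annihilation operator at the level of functions. -/
def aFun (n : ℕ) (φ : Lp ℂ 2 (volume : Measure ℝ)) (u : (Fin (n+1) → ℝ) → ℂ) :
    (Fin n → ℝ) → ℂ :=
  fun θ : Fin n → ℝ => (Real.sqrt (n + 1) : ℂ) * ∫ t : ℝ, φ t * u (Fin.cons t θ)

lemma memLp_aFun (n : ℕ) (φ : Lp ℂ 2 (volume : Measure ℝ)) (χ : Hsp (n+1)) :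
    MemLp (aFun n φ ⇑χ) 2 (volume : Measure (Fin n → ℝ)) :=
  (memLp_key n φ ⇑χ (Lp.memLp χ)).const_mul _

/-- The annihilation operator as a map `Hsp (n+1) → Hsp n` (without the √(n+1) factor
absorbed into `aFun`). -/
def aOp (n : ℕ) (φ : Lp ℂ 2 (volume : Measure ℝ)) (χ : Hsp (n+1)) : Hsp n :=
  (memLp_aFun n φ χ).toLp _

lemma aOp_coe (n : ℕ) (φ : Lp ℂ 2 (volume : Measure ℝ)) (χ : Hsp (n+1)) :
    ⇑(aOp n φ χ) =ᵐ[(volume : Measure (Fin n → ℝ))] aFun n φ ⇑χ :=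
  MemLp.coeFn_toLp _

lemma aFun_congr (n : ℕ) (φ : Lp ℂ 2 (volume : Measure ℝ))
    {u v : (Fin (n+1) → ℝ) → ℂ} (h : u =ᵐ[(volume : Measure (Fin (n+1) → ℝ))] v) :
    aFun n φ u =ᵐ[(volume : Measure (Fin n → ℝ))] aFun n φ v := by
  filter_upwards [ae_slice h] with θ hθ
  unfold aFun
  congr 1
  refine integral_congr_ae ?_
  filter_upwards [hθ] with t ht
  rw [ht]

/-! ### Combinatorial lemmas on `Fin` and `embedSucc` -/

lemma embedSucc_zero (n : ℕ) (ρ : Equiv.Perm (Fin n)) : embedSucc n ρ 0 = 0 := by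
  simp [embedSucc]

lemma embedSucc_succ (n : ℕ) (ρ : Equiv.Perm (Fin n)) (j : Fin n) :
    embedSucc n ρ j.succ = (ρ j).succ := by
  simp [embedSucc]

lemma embedSucc_one (n : ℕ) : embedSucc n 1 = 1 := by
  ext m
  refine Fin.cases ?_ (fun j => ?_) m
  · simp [embedSucc_zero]
  · simp [embedSucc_succ]

lemma embedSucc_mul (n : ℕ) (x y : Equiv.Perm (Fin n)) :
    embedSucc n (x * y) = embedSucc n x * embedSucc n y := by
  ext m
  refine Fin.cases ?_ (fun j => ?_) m
  · simp [Equiv.Perm.mul_apply, embedSucc_zero]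
  · simp [Equiv.Perm.mul_apply, embedSucc_succ]

lemma tau_succ_eq (n i : ℕ) (hi : i + 1 < n) :
    tau (n+1) (i+1) (Nat.succ_lt_succ hi)
      = Equiv.swap (⟨i, Nat.lt_of_succ_lt hi⟩ : Fin n).succ (⟨i + 1, hi⟩ : Fin n).succ := rfl

lemma embedSucc_tau (n i : ℕ) (hi : i + 1 < n) :
    embedSucc n (tau n i hi) = tau (n+1) (i+1) (Nat.succ_lt_succ hi) := by
  apply Equiv.ext
  intro m
  refine Fin.cases ?_ (fun j => ?_) m
  · rw [embedSucc_zero, tau_succ_eq n i hi]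
    exact (Equiv.swap_apply_of_ne_of_ne (Fin.succ_ne_zero _).symm (Fin.succ_ne_zero _).symm).symm
  · rw [embedSucc_succ, tau_succ_eq n i hi]
    exact ((Fin.succ_injective n).swap_apply _ _ _).symm

lemma cons_comp_tau {n i : ℕ} (hi : i + 1 < n) (t : ℝ) (θ : Fin n → ℝ) :
    (fun m => (Fin.cons t θ : Fin (n+1) → ℝ) (tau (n+1) (i+1) (Nat.succ_lt_succ hi) m))
      = (Fin.cons t (fun m => θ (tau n i hi m)) : Fin (n+1) → ℝ) := by
  funext m
  refine Fin.cases ?_ (fun j => ?_) m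
  · rw [tau_succ_eq n i hi]
    rw [Equiv.swap_apply_of_ne_of_ne (Fin.succ_ne_zero _).symm (Fin.succ_ne_zero _).symm]
    simp
  · rw [tau_succ_eq n i hi, (Fin.succ_injective n).swap_apply]
    simp [tau]

/-! ### Intertwining -/

lemma gen_comm (S₂ : ℝ → ℂ)
    (D : ∀ m : ℕ, Equiv.Perm (Fin m) →* unitary (Hsp m →L[ℂ] Hsp m))
    (hD : ∀ m : ℕ, IsZamoRep S₂ m (D m))
    (φ : Lp ℂ 2 (volume : Measure ℝ))
    (n i : ℕ) (hi : i + 1 < n) (χ : Hsp (n+1)) :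
    aOp n φ (((D (n+1)) (tau (n+1) (i+1) (Nat.succ_lt_succ hi)) : Hsp (n+1) →L[ℂ] Hsp (n+1)) χ)
      = ((D n) (tau n i hi) : Hsp n →L[ℂ] Hsp n) (aOp n φ χ) := by
  apply Lp.ext
  set τ' := tau (n+1) (i+1) (Nat.succ_lt_succ hi) with hτ'def
  set χ' := ((D (n+1)) τ' : Hsp (n+1) →L[ℂ] Hsp (n+1)) χ with hχ'def
  set v : (Fin (n+1) → ℝ) → ℂ := fun θ' =>
    S₂ (θ' ⟨i+1+1, Nat.succ_lt_succ hi⟩ - θ' ⟨i+1, Nat.lt_of_succ_lt (Nat.succ_lt_succ hi)⟩)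
      * χ (fun m => θ' (τ' m)) with hvdef
  have h1 : ⇑χ' =ᵐ[(volume : Measure (Fin (n+1) → ℝ))] v := hD (n+1) (i+1) (Nat.succ_lt_succ hi) χ
  have h3 : ∀ θ : Fin n → ℝ, aFun n φ v θ
      = S₂ (θ ⟨i+1, hi⟩ - θ ⟨i, Nat.lt_of_succ_lt hi⟩)
          * aFun n φ ⇑χ (θ ∘ (tau n i hi)) := by
    intro θ
    have e1 : ((⟨i+1+1, Nat.succ_lt_succ hi⟩ : Fin (n+1))) = Fin.succ ⟨i+1, hi⟩ := rfl
    have e2 : ((⟨i+1, Nat.lt_of_succ_lt (Nat.succ_lt_succ hi)⟩ : Fin (n+1)))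
        = Fin.succ ⟨i, Nat.lt_of_succ_lt hi⟩ := rfl
    unfold aFun
    simp only [hvdef, hτ'def, e1, e2, Fin.cons_succ, cons_comp_tau hi]
    set C := S₂ (θ ⟨i+1, hi⟩ - θ ⟨i, Nat.lt_of_succ_lt hi⟩) with hC
    have : (fun t : ℝ => φ t * (C * χ (Fin.cons t (fun m => θ (tau n i hi m)))))
        = fun t : ℝ => C * (φ t * χ (Fin.cons t (fun m => θ (tau n i hi m)))) := by
      funext t; ring
    rw [this, integral_const_mul]
    have : θ ∘ (tau n i hi) = fun m => θ (tau n i hi m) := rfl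
    rw [this]
    ring
  have h4 : (fun θ : Fin n → ℝ => aFun n φ ⇑χ (θ ∘ (tau n i hi)))
      =ᵐ[(volume : Measure (Fin n → ℝ))]
        (fun θ : Fin n → ℝ => (aOp n φ χ) (θ ∘ (tau n i hi))) :=
    (mp_comp_perm n (tau n i hi)).quasiMeasurePreserving.ae_eq (aOp_coe n φ χ).symm
  have h5 := hD n i hi (aOp n φ χ)
  calc ⇑(aOp n φ χ')
      =ᵐ[(volume : Measure (Fin n → ℝ))] aFun n φ ⇑χ' := aOp_coe n φ χ'
    _ =ᵐ[(volume : Measure (Fin n → ℝ))] aFun n φ v := aFun_congr n φ h1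
    _ =ᵐ[(volume : Measure (Fin n → ℝ))]
        ⇑(((D n) (tau n i hi) : Hsp n →L[ℂ] Hsp n) (aOp n φ χ)) := by
        filter_upwards [h4, h5] with θ hθ4 hθ5
        rw [h3 θ, hθ4, hθ5]
        rfl

lemma aOp_comm (S₂ : ℝ → ℂ)
    (D : ∀ m : ℕ, Equiv.Perm (Fin m) →* unitary (Hsp m →L[ℂ] Hsp m))
    (hD : ∀ m : ℕ, IsZamoRep S₂ m (D m))
    (φ : Lp ℂ 2 (volume : Measure ℝ))
    (n : ℕ) (π : Equiv.Perm (Fin n)) (χ : Hsp (n+1)) :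
    aOp n φ (((D (n+1)) (embedSucc n π) : Hsp (n+1) →L[ℂ] Hsp (n+1)) χ)
      = ((D n) π : Hsp n →L[ℂ] Hsp n) (aOp n φ χ) := by
  have hone : ∀ χ : Hsp (n+1),
      aOp n φ (((D (n+1)) (embedSucc n 1) : Hsp (n+1) →L[ℂ] Hsp (n+1)) χ)
        = ((D n) (1 : Equiv.Perm (Fin n)) : Hsp n →L[ℂ] Hsp n) (aOp n φ χ) := by
    intro χ
    rw [embedSucc_one, map_one, map_one]
    simp only [OneMemClass.coe_one, ContinuousLinearMap.one_apply]
  have hmul : ∀ x y : Equiv.Perm (Fin n),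
      (∀ χ : Hsp (n+1), aOp n φ (((D (n+1)) (embedSucc n x) : Hsp (n+1) →L[ℂ] Hsp (n+1)) χ)
          = ((D n) x : Hsp n →L[ℂ] Hsp n) (aOp n φ χ)) →
      (∀ χ : Hsp (n+1), aOp n φ (((D (n+1)) (embedSucc n y) : Hsp (n+1) →L[ℂ] Hsp (n+1)) χ)
          = ((D n) y : Hsp n →L[ℂ] Hsp n) (aOp n φ χ)) →
      ∀ χ : Hsp (n+1), aOp n φ (((D (n+1)) (embedSucc n (x * y)) : Hsp (n+1) →L[ℂ] Hsp (n+1)) χ)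
          = ((D n) (x * y) : Hsp n →L[ℂ] Hsp n) (aOp n φ χ) := by
    intro x y hx hy χ
    rw [embedSucc_mul, map_mul, map_mul]
    simp only [MulMemClass.coe_mul, ContinuousLinearMap.mul_apply]
    rw [hx, hy]
  revert χ
  revert π
  cases n with
  | zero =>
    intro π χ
    have : π = 1 := Subsingleton.elim _ _
    rw [this]
    exact hone χ
  | succ m =>
    intro π
    have hπ : π ∈ Submonoid.closure
        (Set.range fun i : Fin m => Equiv.swap i.castSucc i.succ) := by
      rw [Equiv.Perm.mclosure_swap_castSucc_succ]
      trivial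
    refine Submonoid.closure_induction
      (motive := fun σ _ => ∀ χ : Hsp (m+1+1),
        aOp (m+1) φ (((D (m+1+1)) (embedSucc (m+1) σ) : Hsp (m+1+1) →L[ℂ] Hsp (m+1+1)) χ)
          = ((D (m+1)) σ : Hsp (m+1) →L[ℂ] Hsp (m+1)) (aOp (m+1) φ χ))
      ?_ hone (fun x y _ _ hx hy => hmul x y hx hy) hπ
    rintro x ⟨i, rfl⟩ χ
    beta_reduce
    have hx : Equiv.swap i.castSucc i.succ = tau (m+1) i.val (Nat.succ_lt_succ i.isLt) := by
      unfold tau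
      congr 1 <;> (apply Fin.ext; simp)
    rw [hx, embedSucc_tau]
    exact gen_comm S₂ D hD φ (m+1) i.val (Nat.succ_lt_succ i.isLt) χ

/-- The annihilation operator
`(a(φ)ψ)(θ₁,…,θₙ) = √(n+1)·∫ φ(θ₀)ψ(θ₀,θ₁,…,θₙ)dθ₀`  maps symmetrized vectors of
`L²(ℝ^{n+1})` to symmetrized vectors of `L²(ℝⁿ)`; more generally
`a(φ)∘(1⊗D_n(π)) = D_n(π)∘a(φ)` for every permutation π ∈ Sₙ. -/
theorem statement4 (S₂ : ℝ → ℂ) (hS₂meas : Measurable S₂)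
    (hS₂abs : ∀ θ : ℝ, ‖S₂ θ‖ = 1)
    (hS₂sym : ∀ θ : ℝ, S₂ (-θ) = starRingEnd ℂ (S₂ θ))
    (n : ℕ)
    (D : ∀ m : ℕ, Equiv.Perm (Fin m) →* unitary (Hsp m →L[ℂ] Hsp m))
    (hD : ∀ m : ℕ, IsZamoRep S₂ m (D m))
    (φ : Lp ℂ 2 (volume : Measure ℝ)) :
    (∀ ψ : Hsp (n + 1), symProj (D (n + 1)) ψ = ψ →
      ∃ hg : MemLp
          (fun θ : Fin n → ℝ =>
            (Real.sqrt (n + 1) : ℂ) * ∫ t : ℝ, φ t * ψ (Fin.cons t θ)) 2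
          (volume : Measure (Fin n → ℝ)),
        symProj (D n) (hg.toLp _) = hg.toLp _) ∧
    (∀ (π : Equiv.Perm (Fin n)) (χ : Hsp (n + 1)),
      ∃ (h1 : MemLp
            (fun θ : Fin n → ℝ =>
              (Real.sqrt (n + 1) : ℂ) *
                ∫ t : ℝ, φ t *
                  (((D (n + 1)) (embedSucc n π) : Hsp (n + 1) →L[ℂ] Hsp (n + 1)) χ)
                    (Fin.cons t θ)) 2 (volume : Measure (Fin n → ℝ)))
        (h2 : MemLp
            (fun θ : Fin n → ℝ =>
              (Real.sqrt (n + 1) : ℂ) * ∫ t : ℝ, φ t * χ (Fin.cons t θ)) 2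
            (volume : Measure (Fin n → ℝ))),
        h1.toLp _ = ((D n) π : Hsp n →L[ℂ] Hsp n) (h2.toLp _)) := by
  constructor
  · intro ψ hψ
    refine ⟨memLp_aFun n φ ψ, ?_⟩
    have key : ∀ σ : Equiv.Perm (Fin (n+1)),
        ((D (n+1)) σ : Hsp (n+1) →L[ℂ] Hsp (n+1)) ψ = ψ := by
      intro σ
      conv_lhs => rw [← hψ]
      conv_rhs => rw [← hψ]
      simp only [symProj, ContinuousLinearMap.smul_apply, ContinuousLinearMap.sum_apply]
      rw [_root_.map_smul, map_sum]
      congr 1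
      refine Fintype.sum_equiv (Equiv.mulLeft σ)
        (fun π => ((D (n+1)) σ : Hsp (n+1) →L[ℂ] Hsp (n+1))
          (((D (n+1)) π : Hsp (n+1) →L[ℂ] Hsp (n+1)) ψ))
        (fun π => ((D (n+1)) π : Hsp (n+1) →L[ℂ] Hsp (n+1)) ψ) (fun π => ?_)
      show _ = ((D (n+1)) (σ * π) : Hsp (n+1) →L[ℂ] Hsp (n+1)) ψ
      rw [map_mul]
      simp only [MulMemClass.coe_mul, ContinuousLinearMap.mul_apply]
    have hfix : ∀ π : Equiv.Perm (Fin n),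
        ((D n) π : Hsp n →L[ℂ] Hsp n) (aOp n φ ψ) = aOp n φ ψ := by
      intro π
      rw [← aOp_comm S₂ D hD φ n π ψ, key (embedSucc n π)]
    show symProj (D n) (aOp n φ ψ) = aOp n φ ψ
    simp only [symProj, ContinuousLinearMap.smul_apply, ContinuousLinearMap.sum_apply]
    rw [Finset.sum_congr rfl (fun π _ => hfix π)]
    rw [Finset.sum_const, Finset.card_univ, Fintype.card_perm, Fintype.card_fin]
    rw [← Nat.cast_smul_eq_nsmul ℂ, smul_smul, inv_mul_cancel₀, one_smul]
    exact_mod_cast n.factorial_ne_zero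
  · intro π χ
    exact ⟨memLp_aFun n φ (((D (n+1)) (embedSucc n π) : Hsp (n+1) →L[ℂ] Hsp (n+1)) χ),
      memLp_aFun n φ χ, aOp_comm S₂ D hD φ n π χ⟩

end
end

section
/- Poincaré covariance of the creation operators: for (a, λ) ∈ ℝ² × ℝ define the unitary Uₙ(a,λ) on L²(ℝⁿ, ℂ) by (Uₙ(a,λ)ψ)(θ₁,…,θₙ) = exp(i·Σ_{j=1}^n m(cosh(θⱼ)a₀ − sinh(θⱼ)a₁))·ψ(θ₁−λ,…,θₙ−λ). Then: (a) Uₙ(a,λ) commutes with Pₙ; (b) for every φ ∈ L²(ℝ) and ψ ∈ L²(ℝⁿ) with Pₙψ = ψ, U_{n+1}(a,λ)·P_{n+1}(φ ⊗ (Uₙ(a,λ)*ψ)) = P_{n+1}((U₁(a,λ)φ) ⊗ ψ). -/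
open MeasureTheory Complex

noncomputable section

/-- The phase factor. -/
def ph (m : ℝ) (a : ℝ × ℝ) {k : ℕ} (θ : Fin k → ℝ) : ℂ :=
  Complex.exp (Complex.I *
    ((∑ j : Fin k, m * (Real.cosh (θ j) * a.1 - Real.sinh (θ j) * a.2) : ℝ) : ℂ))

def ph1 (m : ℝ) (a : ℝ × ℝ) (t : ℝ) : ℂ :=
  Complex.exp (Complex.I * ((m * (Real.cosh t * a.1 - Real.sinh t * a.2) : ℝ) : ℂ))

lemma ph_conj_mul (m : ℝ) (a : ℝ × ℝ) {k : ℕ} (θ : Fin k → ℝ) :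
    (starRingEnd ℂ) (ph m a θ) * ph m a θ = 1 := by
  rw [ph, ← Complex.exp_conj, ← Complex.exp_add]
  rw [map_mul, Complex.conj_I, Complex.conj_ofReal]
  rw [show -Complex.I * ((∑ j : Fin k, m * (Real.cosh (θ j) * a.1 - Real.sinh (θ j) * a.2) : ℝ) : ℂ)
      + Complex.I * ((∑ j : Fin k, m * (Real.cosh (θ j) * a.1 - Real.sinh (θ j) * a.2) : ℝ) : ℂ) = 0 by ring]
  exact Complex.exp_zero

lemma ph_norm (m : ℝ) (a : ℝ × ℝ) {k : ℕ} (θ : Fin k → ℝ) : ‖ph m a θ‖ = 1 := by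
  rw [ph, Complex.norm_exp]
  simp [Complex.mul_re]

lemma ph_perm (m : ℝ) (a : ℝ × ℝ) {k : ℕ} (π : Equiv.Perm (Fin k)) (θ : Fin k → ℝ) :
    ph m a (fun j => θ (π j)) = ph m a θ := by
  simp only [ph]
  rw [Equiv.sum_comp π (fun x => m * (Real.cosh (θ x) * a.1 - Real.sinh (θ x) * a.2))]

lemma ph_succ (m : ℝ) (a : ℝ × ℝ) {k : ℕ} (θ : Fin (k + 1) → ℝ) :
    ph m a θ = ph1 m a (θ 0) * ph m a (Fin.tail θ) := by
  simp only [ph, ph1, Fin.tail]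
  rw [Fin.sum_univ_succ, Complex.ofReal_add, mul_add, Complex.exp_add]

lemma ph_continuous (m : ℝ) (a : ℝ × ℝ) {k : ℕ} :
    Continuous fun θ : Fin k → ℝ => ph m a θ := by
  unfold ph
  apply Complex.continuous_exp.comp
  apply Continuous.mul continuous_const
  apply Complex.continuous_ofReal.comp
  apply continuous_finset_sum
  intro j _
  exact continuous_const.mul (((Real.continuous_cosh.comp (continuous_apply j)).mul
    continuous_const).sub ((Real.continuous_sinh.comp (continuous_apply j)).mul continuous_const))

lemma mp_sub (lam : ℝ) (k : ℕ) :
    MeasurePreserving (fun (θ : Fin k → ℝ) (j : Fin k) => θ j - lam) volume volume := by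
  have h : (fun (θ : Fin k → ℝ) (j : Fin k) => θ j - lam) = (· + (fun _ => -lam)) := by
    funext θ j; simp [sub_eq_add_neg]
  rw [h]; exact measurePreserving_add_right volume _

lemma mp_add (lam : ℝ) (k : ℕ) :
    MeasurePreserving (fun (θ : Fin k → ℝ) (j : Fin k) => θ j + lam) volume volume := by
  have h : (fun (θ : Fin k → ℝ) (j : Fin k) => θ j + lam) = (· + (fun _ => lam)) := rfl
  rw [h]; exact measurePreserving_add_right volume _

lemma me_sub (lam : ℝ) (k : ℕ) :
    MeasurableEmbedding (fun (θ : Fin k → ℝ) (j : Fin k) => θ j - lam) := by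
  have h : (fun (θ : Fin k → ℝ) (j : Fin k) => θ j - lam)
      = ⇑(Homeomorph.addRight (fun _ => -lam : Fin k → ℝ)).toMeasurableEquiv := by
    funext θ j; simp [sub_eq_add_neg]
  rw [h]
  exact (Homeomorph.addRight _).toMeasurableEquiv.measurableEmbedding

lemma mp_perm {k : ℕ} (π : Equiv.Perm (Fin k)) :
    MeasurePreserving (fun (θ : Fin k → ℝ) (j : Fin k) => θ (π j)) volume volume := by
  have h := volume_measurePreserving_piCongrLeft (fun _ : Fin k => ℝ) π.symm
  have e : (fun (θ : Fin k → ℝ) (j : Fin k) => θ (π j))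
      = ⇑(MeasurableEquiv.piCongrLeft (fun _ : Fin k => ℝ) π.symm) := by
    funext θ i
    simp [MeasurableEquiv.piCongrLeft, Equiv.piCongrLeft, Equiv.piCongrLeft']
  rw [e]; exact h


set_option maxHeartbeats 2000000

/-- Poincaré covariance of the creation operators: with
(Uₖ(a,λ)ψ)(θ) = exp(i·Σⱼ m(cosh θⱼ·a₀ − sinh θⱼ·a₁))·ψ(θ−λ), (a) Uₙ(a,λ) commutes
with Pₙ, and (b) U_{n+1}(a,λ)·P_{n+1}(φ ⊗ Uₙ(a,λ)*ψ) = P_{n+1}((U₁(a,λ)φ) ⊗ ψ) for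
every Pₙ-symmetric ψ. -/
theorem statement10 (S₂ : ℝ → ℂ) (hS₂meas : Measurable S₂)
    (hS₂abs : ∀ θ : ℝ, ‖S₂ θ‖ = 1)
    (hS₂sym : ∀ θ : ℝ, S₂ (-θ) = starRingEnd ℂ (S₂ θ))
    (m : ℝ) (hm : 0 < m) (a : ℝ × ℝ) (lam : ℝ)
    (n : ℕ)
    (D : ∀ k : ℕ, Equiv.Perm (Fin k) →* unitary (Hsp k →L[ℂ] Hsp k))
    (hD : ∀ k : ℕ, IsZamoRep S₂ k (D k))
    -- the representation U(a,λ) on the k-particle spaces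
    (U : ∀ k : ℕ, Hsp k →L[ℂ] Hsp k)
    (hU : ∀ (k : ℕ) (ψ : Hsp k),
      ∀ᵐ θ ∂(volume : Measure (Fin k → ℝ)),
        (U k ψ) θ
          = Complex.exp (Complex.I *
              ((∑ j : Fin k, m * (Real.cosh (θ j) * a.1 - Real.sinh (θ j) * a.2) : ℝ) : ℂ))
              * ψ (fun j => θ j - lam))
    -- the one-particle representation U₁(a,λ) on L²(ℝ)
    (U₁ : Lp ℂ 2 (volume : Measure ℝ) →L[ℂ] Lp ℂ 2 (volume : Measure ℝ))
    (hU₁ : ∀ φ : Lp ℂ 2 (volume : Measure ℝ),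
      ∀ᵐ t ∂(volume : Measure ℝ),
        (U₁ φ) t
          = Complex.exp (Complex.I *
              ((m * (Real.cosh t * a.1 - Real.sinh t * a.2) : ℝ) : ℂ)) * φ (t - lam)) :
    (U n) ∘L symProj (D n) = symProj (D n) ∘L (U n) ∧
    (∀ (φ : Lp ℂ 2 (volume : Measure ℝ)) (ψ : Hsp n), symProj (D n) ψ = ψ →
      ∃ (h1 : MemLp (fun θ : Fin (n + 1) → ℝ =>
            φ (θ 0) * ((ContinuousLinearMap.adjoint (U n)) ψ) (Fin.tail θ)) 2
          (volume : Measure (Fin (n + 1) → ℝ)))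
        (h2 : MemLp (fun θ : Fin (n + 1) → ℝ => (U₁ φ) (θ 0) * ψ (Fin.tail θ)) 2
          (volume : Measure (Fin (n + 1) → ℝ))),
        (U (n + 1)) (symProj (D (n + 1)) (h1.toLp _))
          = symProj (D (n + 1)) (h2.toLp _)) := by
  classical
  have hU' : ∀ (k : ℕ) (ψ : Hsp k), ∀ᵐ θ ∂(volume : Measure (Fin k → ℝ)),
      (U k ψ) θ = ph m a θ * ψ (fun j => θ j - lam) := hU
  have hU₁' : ∀ φ : Lp ℂ 2 (volume : Measure ℝ), ∀ᵐ t ∂(volume : Measure ℝ),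
      (U₁ φ) t = ph1 m a t * φ (t - lam) := hU₁
  have hT : ∀ k, MeasurePreserving (fun (θ : Fin k → ℝ) (j : Fin k) => θ j - lam) volume volume :=
    mp_sub lam
  -- commutation with the generators
  have hctau : ∀ (k i : ℕ) (hi : i + 1 < k),
      (U k) ∘L ((D k) (tau k i hi) : Hsp k →L[ℂ] Hsp k)
        = ((D k) (tau k i hi) : Hsp k →L[ℂ] Hsp k) ∘L (U k) := by
    intro k i hi
    apply ContinuousLinearMap.ext; intro ψ
    simp only [ContinuousLinearMap.comp_apply]
    apply Lp.ext
    have h1 := hU' k (((D k) (tau k i hi) : Hsp k →L[ℂ] Hsp k) ψ)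
    have h2 := (hT k).quasiMeasurePreserving.ae (hD k i hi ψ)
    have h3 := hD k i hi ((U k) ψ)
    have h4 := (mp_perm (tau k i hi)).quasiMeasurePreserving.ae (hU' k ψ)
    filter_upwards [h1, h2, h3, h4] with θ e1 e2 e3 e4
    rw [e1, e2, e3, e4, sub_sub_sub_cancel_right, ph_perm m a (tau k i hi) θ]
    ring
  -- commutation with all of D
  have hcomm : ∀ (k : ℕ) (π : Equiv.Perm (Fin k)),
      (U k) ∘L ((D k) π : Hsp k →L[ℂ] Hsp k) = ((D k) π : Hsp k →L[ℂ] Hsp k) ∘L (U k) := by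
    intro k
    match k with
    | 0 =>
      intro π
      rw [Subsingleton.elim π 1, map_one, OneMemClass.coe_one, ContinuousLinearMap.one_def,
        ContinuousLinearMap.comp_id, ContinuousLinearMap.id_comp]
    | (j+1) =>
      intro π
      have hmem : π ∈ Submonoid.closure
          (Set.range fun i : Fin j => Equiv.swap i.castSucc i.succ) := by
        rw [Equiv.Perm.mclosure_swap_castSucc_succ]; exact Submonoid.mem_top π
      induction hmem using Submonoid.closure_induction with
      | mem x hx =>
        obtain ⟨i, rfl⟩ := hx
        beta_reduce
        have hi : (i : ℕ) + 1 < j + 1 := Nat.succ_lt_succ i.isLt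
        have hsw : Equiv.swap i.castSucc i.succ = tau (j+1) i hi := rfl
        rw [hsw]; exact hctau (j+1) i hi
      | one =>
        rw [map_one, OneMemClass.coe_one, ContinuousLinearMap.one_def,
          ContinuousLinearMap.comp_id, ContinuousLinearMap.id_comp]
      | mul x y hx hy ihx ihy =>
        rw [map_mul]
        have hco : ((D (j+1) x * D (j+1) y : unitary _) : Hsp (j+1) →L[ℂ] Hsp (j+1))
            = ((D (j+1) x : Hsp (j+1) →L[ℂ] Hsp (j+1)))
              ∘L ((D (j+1) y : Hsp (j+1) →L[ℂ] Hsp (j+1))) := rfl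
        rw [hco, ← ContinuousLinearMap.comp_assoc, ihx, ContinuousLinearMap.comp_assoc, ihy,
          ← ContinuousLinearMap.comp_assoc]
  -- part (a)
  have hPa : ∀ k, (U k) ∘L symProj (D k) = symProj (D k) ∘L (U k) := by
    intro k
    apply ContinuousLinearMap.ext; intro ψ
    simp only [ContinuousLinearMap.comp_apply, symProj, ContinuousLinearMap.smul_apply,
      ContinuousLinearMap.sum_apply, _root_.map_smul, map_sum]
    congr 1
    refine Finset.sum_congr rfl fun π _ => ?_
    have h := congrArg (fun T : Hsp k →L[ℂ] Hsp k => T ψ) (hcomm k π)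
    simpa using h
  refine ⟨hPa n, ?_⟩
  -- U n preserves inner products
  have hinner : ∀ x y : Hsp n, inner ℂ ((U n) x) ((U n) y) = inner ℂ x y := by
    intro x y
    rw [L2.inner_def, L2.inner_def]
    rw [← MeasurePreserving.integral_comp (hT n) (me_sub lam n)
      (fun η => inner ℂ (x η) (y η))]
    apply integral_congr_ae
    filter_upwards [hU' n x, hU' n y] with θ e1 e2
    simp only [RCLike.inner_apply]
    rw [e1, e2, map_mul]
    rw [show ∀ p q r s : ℂ, (p * q) * (r * s) = (r * s) * (p * q) from fun _ _ _ _ => mul_comm _ _,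
      mul_comm ((y : (Fin n → ℝ) → ℂ) _)]
    calc (starRingEnd ℂ) (ph m a θ) * (starRingEnd ℂ) (x fun j => θ j - lam)
          * (ph m a θ * y fun j => θ j - lam)
        = ((starRingEnd ℂ) (ph m a θ) * ph m a θ)
          * ((starRingEnd ℂ) (x fun j => θ j - lam) * y fun j => θ j - lam) := by ring
      _ = (starRingEnd ℂ) (x fun j => θ j - lam) * y fun j => θ j - lam := by
          rw [ph_conj_mul]; ring
  have hAdaA : ∀ x : Hsp n, (ContinuousLinearMap.adjoint (U n)) ((U n) x) = x := by
    intro x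
    apply ext_inner_right ℂ
    intro y
    rw [ContinuousLinearMap.adjoint_inner_left]
    exact hinner x y
  -- surjectivity of U n
  have hsurj : ∀ ψ' : Hsp n, ∃ g : Hsp n, (U n) g = ψ' := by
    intro ψ'
    have hf : MemLp (fun η : Fin n → ℝ =>
        (starRingEnd ℂ) (ph m a (fun j => η j + lam)) * ψ' (fun j => η j + lam)) 2
        (volume : Measure (Fin n → ℝ)) := by
      constructor
      · exact ((Complex.continuous_conj.comp
            ((ph_continuous m a).comp (continuous_pi fun j => (continuous_apply j).add
              continuous_const))).aestronglyMeasurable).mul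
          ((Lp.aestronglyMeasurable ψ').comp_quasiMeasurePreserving
            (mp_add lam n).quasiMeasurePreserving)
      · calc eLpNorm (fun η : Fin n → ℝ =>
              (starRingEnd ℂ) (ph m a (fun j => η j + lam)) * ψ' (fun j => η j + lam)) 2 volume
            = eLpNorm ((ψ' : (Fin n → ℝ) → ℂ)
                ∘ (fun (η : Fin n → ℝ) (j : Fin n) => η j + lam)) 2 volume := by
              apply eLpNorm_congr_norm_ae
              refine Filter.Eventually.of_forall fun η => ?_
              show ‖(starRingEnd ℂ) (ph m a (fun j => η j + lam)) * ψ' (fun j => η j + lam)‖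
                  = ‖((ψ' : (Fin n → ℝ) → ℂ)
                      ∘ (fun (η : Fin n → ℝ) (j : Fin n) => η j + lam)) η‖
              rw [Function.comp_apply, norm_mul, RCLike.norm_conj, ph_norm, one_mul]
          _ = eLpNorm (ψ' : (Fin n → ℝ) → ℂ) 2 volume :=
              eLpNorm_comp_measurePreserving (Lp.aestronglyMeasurable ψ') (mp_add lam n)
          _ < ⊤ := Lp.eLpNorm_lt_top ψ'
    refine ⟨hf.toLp _, ?_⟩
    apply Lp.ext
    filter_upwards [hU' n (hf.toLp _), (hT n).quasiMeasurePreserving.ae hf.coeFn_toLp]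
      with θ e1 e2
    rw [e1, e2]
    have hre : (fun j => θ j - lam + lam) = θ := funext fun j => sub_add_cancel _ _
    rw [hre, ← mul_assoc, mul_comm (ph m a θ) _, ph_conj_mul, one_mul]
  -- U n ∘ (U n)† = 1 on each vector
  have hAAd : ∀ ψ' : Hsp n, (U n) ((ContinuousLinearMap.adjoint (U n)) ψ') = ψ' := by
    intro ψ'
    obtain ⟨g, hg⟩ := hsurj ψ'
    rw [← hg, hAdaA]
  -- tensor products are in L²
  have hten : ∀ (f : Lp ℂ 2 (volume : Measure ℝ)) (χ : Hsp n),
      MemLp (fun θ : Fin (n + 1) → ℝ => f (θ 0) * χ (Fin.tail θ)) 2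
        (volume : Measure (Fin (n + 1) → ℝ)) := by
    intro f χ
    have hF : MemLp (fun z : ℝ × (Fin n → ℝ) => f z.1 * χ z.2) 2
        (volume : Measure (ℝ × (Fin n → ℝ))) := by
      have hasm : AEStronglyMeasurable (fun z : ℝ × (Fin n → ℝ) => f z.1 * χ z.2) volume :=
        ((Lp.aestronglyMeasurable f).comp_quasiMeasurePreserving
          Measure.quasiMeasurePreserving_fst).mul
        ((Lp.aestronglyMeasurable χ).comp_quasiMeasurePreserving
          Measure.quasiMeasurePreserving_snd)
      rw [memLp_two_iff_integrable_sq_norm hasm]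
      have hsq : (fun z : ℝ × (Fin n → ℝ) => ‖f z.1 * χ z.2‖ ^ 2)
          = fun z : ℝ × (Fin n → ℝ) => (‖f z.1‖ ^ 2) * (‖χ z.2‖ ^ 2) := by
        funext z; rw [norm_mul, mul_pow]
      rw [hsq]
      exact Integrable.mul_prod
        ((memLp_two_iff_integrable_sq_norm (Lp.aestronglyMeasurable f)).1 (Lp.memLp f))
        ((memLp_two_iff_integrable_sq_norm (Lp.aestronglyMeasurable χ)).1 (Lp.memLp χ))
    have hcomp := hF.comp_measurePreserving
      (volume_preserving_piFinSuccAbove (fun _ : Fin (n + 1) => ℝ) 0)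
    have heq : (fun θ : Fin (n + 1) → ℝ => f (θ 0) * χ (Fin.tail θ))
        = (fun z : ℝ × (Fin n → ℝ) => f z.1 * χ z.2)
          ∘ (MeasurableEquiv.piFinSuccAbove (fun _ : Fin (n + 1) => ℝ) 0) := by
      funext θ
      simp [MeasurableEquiv.piFinSuccAbove_apply, Fin.removeNth_zero]
    rw [heq]; exact hcomp
  -- the two quasi-measure-preserving coordinate maps
  have he := volume_preserving_piFinSuccAbove (fun _ : Fin (n + 1) => ℝ) 0
  have q0 : Measure.QuasiMeasurePreserving (fun θ : Fin (n + 1) → ℝ => θ 0)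
      (volume : Measure (Fin (n + 1) → ℝ)) (volume : Measure ℝ) := by
    have h2 : (fun θ : Fin (n + 1) → ℝ => θ 0)
        = Prod.fst ∘ ⇑(MeasurableEquiv.piFinSuccAbove (fun _ : Fin (n + 1) => ℝ) 0) := by
      funext θ; simp [MeasurableEquiv.piFinSuccAbove_apply]
    rw [h2]
    exact Measure.quasiMeasurePreserving_fst.comp he.quasiMeasurePreserving
  have qt : Measure.QuasiMeasurePreserving (fun θ : Fin (n + 1) → ℝ => Fin.tail θ)
      (volume : Measure (Fin (n + 1) → ℝ)) (volume : Measure (Fin n → ℝ)) := by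
    have h2 : (fun θ : Fin (n + 1) → ℝ => Fin.tail θ)
        = Prod.snd ∘ ⇑(MeasurableEquiv.piFinSuccAbove (fun _ : Fin (n + 1) => ℝ) 0) := by
      funext θ; simp [MeasurableEquiv.piFinSuccAbove_apply, Fin.removeNth_zero]
    rw [h2]
    exact Measure.quasiMeasurePreserving_snd.comp he.quasiMeasurePreserving
  -- part (b)
  intro φ ψ _hsym
  refine ⟨hten φ (ContinuousLinearMap.adjoint (U n) ψ), hten (U₁ φ) ψ, ?_⟩
  have key : (U (n + 1)) ((hten φ (ContinuousLinearMap.adjoint (U n) ψ)).toLp _)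
      = (hten (U₁ φ) ψ).toLp _ := by
    apply Lp.ext
    have b1 := hU' (n + 1) ((hten φ (ContinuousLinearMap.adjoint (U n) ψ)).toLp _)
    have b2 := (hT (n + 1)).quasiMeasurePreserving.ae
      (hten φ (ContinuousLinearMap.adjoint (U n) ψ)).coeFn_toLp
    have b3 := (hten (U₁ φ) ψ).coeFn_toLp
    have b4 := q0.ae (hU₁' φ)
    have b5 := qt.ae (hU' n (ContinuousLinearMap.adjoint (U n) ψ))
    rw [hAAd ψ] at b5
    filter_upwards [b1, b2, b3, b4, b5] with θ e1 e2 e3 e4 e5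
    have htail : Fin.tail (fun j => θ j - lam)
        = (fun j : Fin n => Fin.tail θ j - lam) := rfl
    rw [e1, e2, e3, e4, e5, htail, ph_succ m a θ]
    ring
  have hc := congrArg (fun T : Hsp (n + 1) →L[ℂ] Hsp (n + 1)
    => T ((hten φ (ContinuousLinearMap.adjoint (U n) ψ)).toLp _)) (hPa (n + 1))
  simp only [ContinuousLinearMap.comp_apply] at hc
  rw [hc, key]


end
end

section
/- Cyclicity of the vacuum for the Zamolodchikov creation operators: (a) for all ψ₁,…,ψₙ ∈ L²(ℝ, ℂ), the iterated symmetrization collapses: Pₙ(ψ₁ ⊗ P_{n−1}(ψ₂ ⊗ ⋯ ⊗ P₂(ψ_{n−1} ⊗ ψₙ)⋯)) = Pₙ(ψ₁ ⊗ ψ₂ ⊗ ⋯ ⊗ ψₙ); equivalently z†(ψ₁)⋯z†(ψₙ)Ω = √(n!)·Pₙ(ψ₁ ⊗ ⋯ ⊗ ψₙ); (b) the linear span of {Pₙ(ψ₁ ⊗ ⋯ ⊗ ψₙ) : ψ₁,…,ψₙ ∈ L²(ℝ, ℂ)} is dense in ℋₙ := {ψ ∈ L²(ℝⁿ) : Pₙψ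 = ψ}. -/
open MeasureTheory Complex

noncomputable section

/-- Iterated application z†(ψ₁)⋯z†(ψₙ)Ω of creation operators to the vacuum Ω. -/
def applyChain (zc : ∀ k : ℕ, Lp ℂ 2 (volume : Measure ℝ) → Hsp k → Hsp (k + 1))
    (Ω : Hsp 0) : (l : List (Lp ℂ 2 (volume : Measure ℝ))) → Hsp l.length
  | [] => Ω
  | φ :: rest => zc rest.length φ (applyChain zc Ω rest)

namespace Stmt11


/-- composing with a permutation of coordinates is measure preserving -/
lemma measurePreserving_permComp {n : ℕ} (σ : Equiv.Perm (Fin n)) :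
    MeasurePreserving (fun θ : Fin n → ℝ => fun m => θ (σ m)) volume volume := by
  have hm : Measurable (fun θ : Fin n → ℝ => fun m => θ (σ m)) :=
    measurable_pi_lambda _ (fun m => measurable_pi_apply (σ m))
  constructor
  · exact hm
  · refine (Measure.pi_eq fun s hs => ?_).symm
    rw [Measure.map_apply hm (MeasurableSet.univ_pi hs)]
    have : (fun θ : Fin n → ℝ => fun m => θ (σ m)) ⁻¹' (Set.univ.pi s)
        = Set.univ.pi (fun m => s (σ.symm m)) := by
      ext θ
      simp only [Set.mem_preimage, Set.mem_univ_pi]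
      constructor
      · intro h m; simpa using h (σ.symm m)
      · intro h m; simpa using h (σ m)
    rw [this, volume_pi_pi]
    exact Equiv.prod_comp σ.symm (fun m => volume (s m)) ▸
      (Equiv.prod_comp σ.symm fun i => volume (s i))

lemma qmp_permComp {n : ℕ} (σ : Equiv.Perm (Fin n)) :
    Measure.QuasiMeasurePreserving (fun θ : Fin n → ℝ => fun m => θ (σ m)) volume volume :=
  (measurePreserving_permComp σ).quasiMeasurePreserving

lemma mp_finSuccAbove (k : ℕ) :
    MeasurePreserving (⇑(MeasurableEquiv.piFinSuccAbove (fun _ : Fin (k+1) => ℝ) 0))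
      volume volume :=
  volume_preserving_piFinSuccAbove _ 0

lemma finSuccAbove_apply (k : ℕ) (θ : Fin (k+1) → ℝ) :
    MeasurableEquiv.piFinSuccAbove (fun _ : Fin (k+1) => ℝ) 0 θ = (θ 0, Fin.tail θ) := by
  refine Prod.ext rfl (funext fun j => ?_)
  simp [MeasurableEquiv.piFinSuccAbove, Fin.tail]

lemma qmp_tail (k : ℕ) :
    Measure.QuasiMeasurePreserving (Fin.tail : (Fin (k+1) → ℝ) → (Fin k → ℝ))
      volume volume := by
  have h : (Fin.tail : (Fin (k+1) → ℝ) → (Fin k → ℝ))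
      = Prod.snd ∘ ⇑(MeasurableEquiv.piFinSuccAbove (fun _ : Fin (k+1) => ℝ) 0) := by
    funext θ; rw [Function.comp_apply, finSuccAbove_apply]
  rw [h]
  exact Measure.quasiMeasurePreserving_snd.comp (mp_finSuccAbove k).quasiMeasurePreserving

lemma qmp_eval {k : ℕ} (j : Fin k) :
    Measure.QuasiMeasurePreserving (fun θ : Fin k → ℝ => θ j) volume volume := by
  refine ⟨measurable_pi_apply j, Measure.AbsolutelyContinuous.mk fun s hs h0 => ?_⟩
  rw [Measure.map_apply (measurable_pi_apply j) hs]
  have : (fun θ : Fin k → ℝ => θ j) ⁻¹' s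
      = Set.univ.pi (Function.update (fun _ : Fin k => (Set.univ : Set ℝ)) j s) :=
    Set.eval_preimage
  rw [this, volume_pi_pi]
  exact Finset.prod_eq_zero (Finset.mem_univ j) (by simp [h0])



lemma memℒp_tens {k : ℕ} {f : ℝ → ℂ} {g : (Fin k → ℝ) → ℂ}
    (hf : MemLp f 2 (volume : Measure ℝ)) (hg : MemLp g 2 (volume : Measure (Fin k → ℝ))) :
    MemLp (fun θ : Fin (k+1) → ℝ => f (θ 0) * g (Fin.tail θ)) 2 volume := by
  have hF : MemLp (fun z : ℝ × (Fin k → ℝ) => f z.1 * g z.2) 2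
      ((volume : Measure ℝ).prod (volume : Measure (Fin k → ℝ))) := by
    have hsm : AEStronglyMeasurable (fun z : ℝ × (Fin k → ℝ) => f z.1 * g z.2)
        ((volume : Measure ℝ).prod volume) :=
      (hf.aestronglyMeasurable.comp_quasiMeasurePreserving
          Measure.quasiMeasurePreserving_fst).mul
        (hg.aestronglyMeasurable.comp_quasiMeasurePreserving
          Measure.quasiMeasurePreserving_snd)
    refine (memLp_two_iff_integrable_sq_norm hsm).mpr ?_
    have h1 : Integrable (fun x : ℝ => ‖f x‖ ^ 2) volume :=
      (memLp_two_iff_integrable_sq_norm hf.aestronglyMeasurable).mp hf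
    have h2 : Integrable (fun y : Fin k → ℝ => ‖g y‖ ^ 2) volume :=
      (memLp_two_iff_integrable_sq_norm hg.aestronglyMeasurable).mp hg
    have := h1.mul_prod h2
    refine this.congr (Filter.Eventually.of_forall fun z => ?_)
    simp [norm_mul, mul_pow]
  have hmap : Measure.map (⇑(MeasurableEquiv.piFinSuccAbove (fun _ : Fin (k+1) => ℝ) 0))
      (volume : Measure (Fin (k+1) → ℝ)) = (volume : Measure ℝ).prod volume :=
    (mp_finSuccAbove k).map_eq
  have := (hmap ▸ hF).comp_of_map
    (mp_finSuccAbove k).measurable.aemeasurable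
  refine this.ae_eq (Filter.Eventually.of_forall fun θ => ?_)
  simp only [Function.comp_apply, finSuccAbove_apply]

/-- a.e. transfer along Fin.tail -/
lemma tail_ae {k : ℕ} {u v : (Fin k → ℝ) → ℂ} (h : u =ᶠ[ae (volume : Measure (Fin k → ℝ))] v) :
    (fun θ : Fin (k+1) → ℝ => u (Fin.tail θ)) =ᶠ[ae volume] fun θ => v (Fin.tail θ) :=
  (qmp_tail k).ae_eq_comp h

/-- the creation "tensor" map as a linear map -/
def tlm {k : ℕ} (φ : Lp ℂ 2 (volume : Measure ℝ)) : Hsp k →ₗ[ℂ] Hsp (k+1) where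
  toFun ψ := ((memℒp_tens (Lp.memLp φ) (Lp.memLp ψ))).toLp
    (fun θ : Fin (k+1) → ℝ => φ (θ 0) * ψ (Fin.tail θ))
  map_add' ψ χ := by
    rw [← MemLp.toLp_add]
    refine MemLp.toLp_congr _ _ ?_
    filter_upwards [tail_ae (k := k) (Lp.coeFn_add ψ χ)] with θ hθ
    simp only [hθ, Pi.add_apply]
    ring
  map_smul' c ψ := by
    simp only [RingHom.id_apply]
    rw [← MemLp.toLp_const_smul]
    refine MemLp.toLp_congr _ _ ?_
    filter_upwards [tail_ae (k := k) (Lp.coeFn_smul c ψ)] with θ hθ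
    simp only [hθ, Pi.smul_apply, smul_eq_mul]
    ring

lemma tlm_coeFn {k : ℕ} (φ : Lp ℂ 2 (volume : Measure ℝ)) (ψ : Hsp k) :
    ⇑(tlm φ ψ) =ᶠ[ae volume] fun θ : Fin (k+1) → ℝ => φ (θ 0) * ψ (Fin.tail θ) :=
  MemLp.coeFn_toLp (memℒp_tens (Lp.memLp φ) (Lp.memLp ψ))

lemma tlm_eq_toLp {k : ℕ} (φ : Lp ℂ 2 (volume : Measure ℝ)) (ψ : Hsp k)
    {g : (Fin (k+1) → ℝ) → ℂ} (hg : MemLp g 2 volume)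
    (h : g =ᶠ[ae volume] fun θ => φ (θ 0) * ψ (Fin.tail θ)) :
    hg.toLp g = tlm φ ψ :=
  MemLp.toLp_congr hg (memℒp_tens (Lp.memLp φ) (Lp.memLp ψ)) h


variable {n : ℕ} (D : Equiv.Perm (Fin n) →* unitary (Hsp n →L[ℂ] Hsp n))

lemma D_mul_apply (π σ : Equiv.Perm (Fin n)) (ψ : Hsp n) :
    ((D (π * σ)) : Hsp n →L[ℂ] Hsp n) ψ
      = ((D π) : Hsp n →L[ℂ] Hsp n) (((D σ) : Hsp n →L[ℂ] Hsp n) ψ) := by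
  rw [map_mul]
  rfl

lemma symProj_D (π : Equiv.Perm (Fin n)) (ψ : Hsp n) :
    symProj D (((D π) : Hsp n →L[ℂ] Hsp n) ψ) = symProj D ψ := by
  simp only [symProj, ContinuousLinearMap.smul_apply, ContinuousLinearMap.sum_apply]
  congr 1
  rw [← Equiv.sum_comp (Equiv.mulRight π) (fun σ => ((D σ) : Hsp n →L[ℂ] Hsp n) ψ)]
  refine Finset.sum_congr rfl fun σ _ => ?_
  rw [Equiv.coe_mulRight, D_mul_apply]

lemma symProj_apply (ψ : Hsp n) :
    symProj D ψ = (n.factorial : ℂ)⁻¹ • ∑ π : Equiv.Perm (Fin n),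
      ((D π) : Hsp n →L[ℂ] Hsp n) ψ := by
  simp [symProj, ContinuousLinearMap.sum_apply]

lemma avg_eq_self {M : Type*} [AddCommGroup M] [Module ℂ M] (x : M) :
    (n.factorial : ℂ)⁻¹ • ∑ _π : Equiv.Perm (Fin n), x = x := by
  rw [Finset.sum_const, Finset.card_univ, Fintype.card_perm, Fintype.card_fin,
    ← Nat.cast_smul_eq_nsmul ℂ, smul_smul,
    inv_mul_cancel₀ (by exact_mod_cast Nat.factorial_ne_zero n), one_smul]

lemma symProj_symProj (ψ : Hsp n) : symProj D (symProj D ψ) = symProj D ψ := by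
  rw [symProj_apply D ψ]
  conv_lhs => rw [_root_.map_smul, map_sum]
  have : ∀ π ∈ Finset.univ, symProj D (((D π) : Hsp n →L[ℂ] Hsp n) ψ) = symProj D ψ :=
    fun π _ => symProj_D D π ψ
  rw [Finset.sum_congr rfl this, avg_eq_self]
  exact symProj_apply D ψ


lemma tau_succ_comm {k i : ℕ} (hi : i + 1 < k) (j : Fin k) :
    tau (k+1) (i+1) (Nat.succ_lt_succ hi) j.succ = (tau k i hi j).succ := by
  simp only [tau, Equiv.swap_apply_def]
  split_ifs <;> simp_all [Fin.ext_iff] <;> omega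

lemma intertwine_gen {S₂ : ℝ → ℂ} {k : ℕ}
    {Dk : Equiv.Perm (Fin k) →* unitary (Hsp k →L[ℂ] Hsp k)}
    {Dk1 : Equiv.Perm (Fin (k+1)) →* unitary (Hsp (k+1) →L[ℂ] Hsp (k+1))}
    (hDk : IsZamoRep S₂ k Dk) (hDk1 : IsZamoRep S₂ (k+1) Dk1)
    (i : ℕ) (hi : i + 1 < k) (φ : Lp ℂ 2 (volume : Measure ℝ)) (ψ : Hsp k) :
    ((Dk1 (tau (k+1) (i+1) (Nat.succ_lt_succ hi))) : Hsp (k+1) →L[ℂ] Hsp (k+1)) (tlm φ ψ)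
      = tlm φ (((Dk (tau k i hi)) : Hsp k →L[ℂ] Hsp k) ψ) := by
  set τ := tau k i hi
  set τ' := tau (k+1) (i+1) (Nat.succ_lt_succ hi)
  apply Lp.ext
  have h1 := hDk1 (i+1) (Nat.succ_lt_succ hi) (tlm φ ψ)
  have h2 := (qmp_permComp τ').ae_eq_comp (tlm_coeFn φ ψ)
  have h3 := tail_ae (k := k) (hDk i hi ψ)
  have h4 := tlm_coeFn φ (((Dk τ) : Hsp k →L[ℂ] Hsp k) ψ)
  filter_upwards [h1, h2, h3, h4] with θ e1 e2 e3 e4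
  rw [e1, e4, e3]
  simp only [Function.comp_apply] at e2
  rw [e2]
  have hz : τ' 0 = 0 := by
    simp only [τ', tau, Equiv.swap_apply_def]
    split_ifs <;> simp_all [Fin.ext_iff]
  have htail : Fin.tail (fun m => θ (τ' m)) = fun m => Fin.tail θ (τ m) := by
    funext j
    simp only [Fin.tail]
    rw [tau_succ_comm hi j]
  have hc1 : Fin.tail θ ⟨i + 1, hi⟩ = θ ⟨i + 1 + 1, Nat.succ_lt_succ hi⟩ := rfl
  have hc2 : Fin.tail θ ⟨i, Nat.lt_of_succ_lt hi⟩
      = θ ⟨i + 1, Nat.lt_of_succ_lt (Nat.succ_lt_succ hi)⟩ := rfl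
  rw [hz, htail, hc1, hc2]
  ring_nf
  rfl

lemma intertwine_all {S₂ : ℝ → ℂ} {k : ℕ}
    {Dk : Equiv.Perm (Fin k) →* unitary (Hsp k →L[ℂ] Hsp k)}
    {Dk1 : Equiv.Perm (Fin (k+1)) →* unitary (Hsp (k+1) →L[ℂ] Hsp (k+1))}
    (hDk : IsZamoRep S₂ k Dk) (hDk1 : IsZamoRep S₂ (k+1) Dk1)
    (π : Equiv.Perm (Fin k)) :
    ∃ π' : Equiv.Perm (Fin (k+1)),
      ∀ (φ : Lp ℂ 2 (volume : Measure ℝ)) (ψ : Hsp k),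
        ((Dk1 π') : Hsp (k+1) →L[ℂ] Hsp (k+1)) (tlm φ ψ)
          = tlm φ (((Dk π) : Hsp k →L[ℂ] Hsp k) ψ) := by
  rcases k with _ | m
  · refine ⟨1, fun φ ψ => ?_⟩
    have hπ : π = 1 := Subsingleton.elim _ _
    rw [hπ]
    simp only [map_one]
    rfl
  · have hmem : π ∈ Submonoid.closure
        (Set.range fun i : Fin m ↦ Equiv.swap i.castSucc i.succ) := by
      rw [Equiv.Perm.mclosure_swap_castSucc_succ m]; trivial
    induction hmem using Submonoid.closure_induction with
    | mem σ hσ =>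
      obtain ⟨i, rfl⟩ := hσ
      have hi : (i : ℕ) + 1 < m + 1 := Nat.succ_lt_succ i.isLt
      have hswap : Equiv.swap i.castSucc i.succ = tau (m+1) i hi := by
        simp only [tau]
        congr 1 <;> exact Fin.ext rfl
      refine ⟨tau (m+2) (i+1) (Nat.succ_lt_succ hi), fun φ ψ => ?_⟩
      simp only [hswap]
      exact intertwine_gen hDk hDk1 i hi φ ψ
    | one =>
      refine ⟨1, fun φ ψ => ?_⟩
      simp only [map_one]
      rfl
    | mul σ₁ σ₂ h₁ h₂ ih₁ ih₂ =>
      obtain ⟨π₁, hπ₁⟩ := ih₁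
      obtain ⟨π₂, hπ₂⟩ := ih₂
      refine ⟨π₁ * π₂, fun φ ψ => ?_⟩
      rw [D_mul_apply, hπ₂, hπ₁, ← D_mul_apply]


lemma collapse {S₂ : ℝ → ℂ} {k : ℕ}
    {Dk : Equiv.Perm (Fin k) →* unitary (Hsp k →L[ℂ] Hsp k)}
    {Dk1 : Equiv.Perm (Fin (k+1)) →* unitary (Hsp (k+1) →L[ℂ] Hsp (k+1))}
    (hDk : IsZamoRep S₂ k Dk) (hDk1 : IsZamoRep S₂ (k+1) Dk1)
    (φ : Lp ℂ 2 (volume : Measure ℝ)) (ξ : Hsp k) :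
    symProj Dk1 (tlm φ (symProj Dk ξ)) = symProj Dk1 (tlm φ ξ) := by
  rw [symProj_apply Dk ξ, _root_.map_smul (tlm φ), map_sum (tlm φ) _ Finset.univ,
    _root_.map_smul (symProj Dk1), map_sum (symProj Dk1) _ Finset.univ]
  have : ∀ π ∈ Finset.univ, symProj Dk1 (tlm φ (((Dk π) : Hsp k →L[ℂ] Hsp k) ξ))
      = symProj Dk1 (tlm φ ξ) := by
    intro π _
    obtain ⟨π', hπ'⟩ := intertwine_all hDk hDk1 π
    rw [← hπ' φ ξ, symProj_D]
  rw [Finset.sum_congr rfl this, avg_eq_self]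

instance : IsFiniteMeasure (volume : Measure (Fin 0 → ℝ)) := by
  constructor
  have : (volume : Measure (Fin 0 → ℝ)) Set.univ = ∏ i : Fin 0, (volume : Measure ℝ) Set.univ :=
    Measure.pi_univ _
  rw [this]
  simp

lemma memℒp_prodf : ∀ (n : ℕ) (ψs : Fin n → Lp ℂ 2 (volume : Measure ℝ)),
    MemLp (fun θ : Fin n → ℝ => ∏ j : Fin n, (ψs j) (θ j)) 2
      (volume : Measure (Fin n → ℝ))
  | 0, ψs => by
    simpa using memLp_const (μ := (volume : Measure (Fin 0 → ℝ))) (c := (1 : ℂ))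
  | (n+1), ψs => by
    have ih := memℒp_prodf n (fun j => ψs j.succ)
    have := memℒp_tens (Lp.memLp (ψs 0)) ih
    refine this.ae_eq (Filter.Eventually.of_forall fun θ => ?_)
    simp only [Fin.prod_univ_succ]
    rfl

/-- Part (a), as a standalone statement. -/
lemma part_a {S₂ : ℝ → ℂ}
    (D : ∀ k : ℕ, Equiv.Perm (Fin k) →* unitary (Hsp k →L[ℂ] Hsp k))
    (hD : ∀ k : ℕ, IsZamoRep S₂ k (D k))
    (zc : ∀ k : ℕ, Lp ℂ 2 (volume : Measure ℝ) → Hsp k → Hsp (k + 1))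
    (hzc : ∀ (k : ℕ) (φ : Lp ℂ 2 (volume : Measure ℝ)) (χ : Hsp k),
      ∃ h : MemLp (fun θ : Fin (k + 1) → ℝ => φ (θ 0) * χ (Fin.tail θ)) 2
          (volume : Measure (Fin (k + 1) → ℝ)),
        zc k φ χ = (Real.sqrt (k + 1) : ℂ) • symProj (D (k + 1)) (h.toLp _))
    (Ω : Hsp 0) (hΩ : ∀ᵐ θ ∂(volume : Measure (Fin 0 → ℝ)), Ω θ = 1) :
    ∀ l : List (Lp ℂ 2 (volume : Measure ℝ)),
      applyChain zc Ω l
        = (Real.sqrt (l.length.factorial) : ℂ) •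
            symProj (D l.length) ((memℒp_prodf l.length (fun j => l.get j)).toLp _) := by
  intro l
  induction l with
  | nil =>
    set hmp := memℒp_prodf 0 (fun j => ([] : List (Lp ℂ 2 (volume : Measure ℝ))).get j)
    have h1 : symProj (D 0) (hmp.toLp _) = hmp.toLp _ := by
      rw [symProj_apply, Fintype.sum_subsingleton _ 1, map_one]
      show (Nat.factorial 0 : ℂ)⁻¹ • (1 : Hsp 0 →L[ℂ] Hsp 0) _ = _
      simp
    show Ω = (Real.sqrt ((Nat.factorial 0 : ℕ) : ℝ) : ℂ) • symProj (D 0) (hmp.toLp _)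
    rw [h1, show ((Real.sqrt ((Nat.factorial 0 : ℕ) : ℝ)) : ℂ) = 1 by simp, one_smul]
    apply Lp.ext
    filter_upwards [hΩ, MemLp.coeFn_toLp hmp] with θ e1 e2
    rw [e1, e2]
    simp
  | cons φ rest ih =>
    set n := rest.length
    show zc n φ (applyChain zc Ω rest) = _
    obtain ⟨hm, hz⟩ := hzc n φ (applyChain zc Ω rest)
    rw [hz]
    set ξ : Hsp n := (memℒp_prodf n (fun j => rest.get j)).toLp _ with hξ
    have h1 : hm.toLp _ = tlm φ (applyChain zc Ω rest) :=
      tlm_eq_toLp φ _ hm (Filter.EventuallyEq.refl _ _)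
    rw [h1, ih, _root_.map_smul (tlm φ), _root_.map_smul (symProj (D (n+1))),
      collapse (hD n) (hD (n+1)) φ ξ]
    have h2 : tlm φ ξ = (memℒp_prodf (n+1) (fun j => (φ :: rest).get j)).toLp _ := by
      refine (tlm_eq_toLp φ ξ (memℒp_prodf (n+1) (fun j => (φ :: rest).get j)) ?_).symm
      filter_upwards [tail_ae (k := n) (MemLp.coeFn_toLp (memℒp_prodf n (fun j => rest.get j)))] with θ e1
      rw [Fin.prod_univ_succ]
      show _ = (φ : ℝ → ℂ) (θ 0) * (ξ : (Fin n → ℝ) → ℂ) (Fin.tail θ)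
      rw [hξ, e1]
      rfl
    rw [h2, smul_smul, ← Complex.ofReal_mul]
    congr 2
    rw [← Real.sqrt_mul (by positivity)]
    congr 1
    show ((n:ℝ) + 1) * (n.factorial : ℝ) = ((n+1).factorial : ℕ)
    push_cast [Nat.factorial_succ]
    ring


/-! ### Part (b): density -/

/-- the set of plain (un-symmetrized) tensors -/
def Tset (k : ℕ) : Set (Hsp k) :=
  {x : Hsp k | ∃ (ψs : Fin k → Lp ℂ 2 (volume : Measure ℝ))
    (h : MemLp (fun θ : Fin k → ℝ => ∏ j : Fin k, (ψs j) (θ j)) 2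
      (volume : Measure (Fin k → ℝ))), x = h.toLp _}

/-- the closed span of the plain tensors -/
def Mspan (k : ℕ) : Submodule ℂ (Hsp k) := (Submodule.span ℂ (Tset k)).topologicalClosure

lemma prod_indicator_eq {k : ℕ} (t : Fin k → Set ℝ) (θ : Fin k → ℝ) :
    (Set.univ.pi t).indicator (fun _ => (1:ℂ)) θ
      = ∏ j : Fin k, (t j).indicator (fun _ => (1:ℂ)) (θ j) := by
  by_cases hθ : θ ∈ Set.univ.pi t
  · rw [Set.indicator_of_mem hθ,
      Finset.prod_congr rfl (fun j _ => Set.indicator_of_mem (hθ j (Set.mem_univ j)) _)]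
    simp
  · rw [Set.indicator_of_notMem hθ]
    rw [Set.mem_univ_pi] at hθ
    push_neg at hθ
    obtain ⟨j, hj⟩ := hθ
    exact (Finset.prod_eq_zero (Finset.mem_univ j) (Set.indicator_of_notMem hj _)).symm

/-- indicator of a finite-measure measurable rectangle lies in the tensor set -/
lemma rect_indicator_mem {k : ℕ} (t : Fin k → Set ℝ) (ht : ∀ j, MeasurableSet (t j))
    (htfin : ∀ j, volume (t j) ≠ ⊤) (hμ : volume (Set.univ.pi t) ≠ ⊤) :
    indicatorConstLp 2 (MeasurableSet.univ_pi ht) hμ (1:ℂ) ∈ Tset k := by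
  set ψs := fun j => indicatorConstLp 2 (ht j) (htfin j) (1:ℂ) with hψs
  refine ⟨ψs, memℒp_prodf k ψs, ?_⟩
  have hae : ∀ j : Fin k, (fun θ : Fin k → ℝ => (ψs j) (θ j))
      =ᶠ[ae (volume : Measure (Fin k → ℝ))]
        (fun θ => (t j).indicator (fun _ => (1:ℂ)) (θ j)) :=
    fun j => (qmp_eval j).ae_eq_comp indicatorConstLp_coeFn
  apply Lp.ext
  filter_upwards [indicatorConstLp_coeFn (μ := (volume : Measure (Fin k → ℝ)))
      (hs := MeasurableSet.univ_pi ht) (hμs := hμ) (c := (1:ℂ)),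
    MemLp.coeFn_toLp (memℒp_prodf k ψs), ae_all_iff.mpr hae] with θ e1 e2 e3
  rw [e1, e2, prod_indicator_eq]
  exact Finset.prod_congr rfl fun j _ => (e3 j).symm

/-- inclusion–exclusion for Lp indicators -/
lemma I_union {α : Type*} [MeasurableSpace α] {μ : Measure α} {A B : Set α}
    (hA : MeasurableSet A) (hB : MeasurableSet B) (hμA : μ A ≠ ⊤) (hμB : μ B ≠ ⊤)
    (hμAB : μ (A ∪ B) ≠ ⊤) (hμAB' : μ (A ∩ B) ≠ ⊤) :
    (indicatorConstLp 2 (hA.union hB) hμAB (1:ℂ))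
      = indicatorConstLp 2 hA hμA 1 + indicatorConstLp 2 hB hμB 1
        - indicatorConstLp 2 (hA.inter hB) hμAB' 1 := by
  apply Lp.ext
  have h1 := Lp.coeFn_sub (indicatorConstLp 2 hA hμA (1:ℂ) + indicatorConstLp 2 hB hμB 1)
    (indicatorConstLp 2 (hA.inter hB) hμAB' 1)
  have h2 := Lp.coeFn_add (indicatorConstLp 2 hA hμA (1:ℂ)) (indicatorConstLp 2 hB hμB 1)
  filter_upwards [h1, h2, indicatorConstLp_coeFn (μ := μ) (hs := hA.union hB) (hμs := hμAB) (c := (1:ℂ)),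
    indicatorConstLp_coeFn (μ := μ) (hs := hA) (hμs := hμA) (c := (1:ℂ)),
    indicatorConstLp_coeFn (μ := μ) (hs := hB) (hμs := hμB) (c := (1:ℂ)),
    indicatorConstLp_coeFn (μ := μ) (hs := hA.inter hB) (hμs := hμAB') (c := (1:ℂ))]
    with x e1 e2 e3 e4 e5 e6
  rw [e3, e1, Pi.sub_apply, e2, Pi.add_apply, e4, e5, e6]
  by_cases hxA : x ∈ A <;> by_cases hxB : x ∈ B <;>
    simp [Set.indicator_apply, hxA, hxB]

/-- union of a list of sets -/
def LU {α : Type*} (L : List (Set α)) : Set α := L.foldr (· ∪ ·) ∅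

lemma LU_nil {α : Type*} : LU ([] : List (Set α)) = ∅ := rfl

lemma LU_cons {α : Type*} (A : Set α) (L : List (Set α)) : LU (A :: L) = A ∪ LU L := rfl

lemma LU_measurable {α : Type*} [MeasurableSpace α] :
    ∀ (L : List (Set α)), (∀ A ∈ L, MeasurableSet A) → MeasurableSet (LU L)
  | [], _ => by simp [LU_nil]
  | (A :: L), h => by
    rw [LU_cons]
    exact (h A (List.mem_cons_self)).union
      (LU_measurable L fun B hB => h B (List.mem_cons_of_mem A hB))

lemma LU_finite {α : Type*} [MeasurableSpace α] {μ : Measure α} :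
    ∀ (L : List (Set α)), (∀ A ∈ L, μ A ≠ ⊤) → μ (LU L) ≠ ⊤
  | [], _ => by simp [LU_nil]
  | (A :: L), h => by
    rw [LU_cons]
    refine ne_top_of_le_ne_top ?_ (measure_union_le A (LU L))
    exact ENNReal.add_ne_top.mpr ⟨h A (List.mem_cons_self),
      LU_finite L fun B hB => h B (List.mem_cons_of_mem A hB)⟩

lemma LU_inter_distrib {α : Type*} (B : Set α) :
    ∀ (L : List (Set α)), B ∩ LU L = LU (L.map (fun A => B ∩ A))
  | [] => by simp [LU_nil]
  | (A :: L) => by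
    rw [LU_cons, List.map_cons, LU_cons, Set.inter_union_distrib_left,
      LU_inter_distrib B L]

/-- rectangles (or the empty set) -/
def IsRectE {k : ℕ} (A : Set (Fin k → ℝ)) : Prop :=
  (∃ t : Fin k → Set ℝ, (∀ j, MeasurableSet (t j)) ∧ (∀ j, volume (t j) ≠ ⊤)
    ∧ A = Set.univ.pi t) ∨ A = ∅

lemma IsRectE.measurable {k : ℕ} {A : Set (Fin k → ℝ)} (h : IsRectE A) : MeasurableSet A := by
  rcases h with ⟨t, ht, _, rfl⟩ | rfl
  · exact MeasurableSet.univ_pi ht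
  · exact MeasurableSet.empty

lemma IsRectE.inter {k : ℕ} {A B : Set (Fin k → ℝ)} (hA : IsRectE A) (hB : IsRectE B) :
    IsRectE (A ∩ B) := by
  rcases hA with ⟨t, ht, htf, rfl⟩ | rfl
  · rcases hB with ⟨u, hu, huf, rfl⟩ | rfl
    · refine Or.inl ⟨fun j => t j ∩ u j, fun j => (ht j).inter (hu j),
        fun j => ne_top_of_le_ne_top (htf j) (measure_mono Set.inter_subset_left), ?_⟩
      rw [← Set.pi_inter_distrib]
    · exact Or.inr (Set.inter_empty _)
  · exact Or.inr (Set.empty_inter _)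

lemma I_empty {α : Type*} [MeasurableSpace α] {μ : Measure α} (h : μ (∅ : Set α) ≠ ⊤) :
    indicatorConstLp 2 MeasurableSet.empty h (1:ℂ) = 0 := by
  apply Lp.ext
  filter_upwards [indicatorConstLp_coeFn (μ := μ) (hs := MeasurableSet.empty) (hμs := h) (c := (1:ℂ)),
    Lp.coeFn_zero ℂ 2 μ] with x e1 e2
  rw [e1, e2]
  simp

/-- indicator of a rectangle (with finite measure) lies in Mspan -/
lemma rectE_indicator_mem {k : ℕ} {A : Set (Fin k → ℝ)} (hA : IsRectE A)
    (hm : MeasurableSet A) (hf : volume A ≠ ⊤) :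
    indicatorConstLp 2 hm hf (1:ℂ) ∈ Mspan k := by
  rcases hA with ⟨t, ht, htf, rfl⟩ | rfl
  · have : indicatorConstLp 2 hm hf (1:ℂ)
        = indicatorConstLp 2 (MeasurableSet.univ_pi ht) hf (1:ℂ) := rfl
    rw [this]
    exact Submodule.le_topologicalClosure _
      (Submodule.subset_span (rect_indicator_mem t ht htf hf))
  · have : indicatorConstLp 2 hm hf (1:ℂ)
        = indicatorConstLp 2 MeasurableSet.empty hf (1:ℂ) := rfl
    rw [this, I_empty]
    exact Submodule.zero_mem _

/-- indicators of finite unions of rectangles lie in Mspan -/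
lemma LU_indicator_mem {k : ℕ} : ∀ (m : ℕ) (L : List (Set (Fin k → ℝ))), L.length = m →
    (∀ A ∈ L, IsRectE A) → ∀ (hm : MeasurableSet (LU L)) (hf : volume (LU L) ≠ ⊤),
    indicatorConstLp 2 hm hf (1:ℂ) ∈ Mspan k := by
  intro m
  induction m with
  | zero =>
    intro L hL _ hm hf
    rw [List.length_eq_zero_iff] at hL
    subst hL
    have : indicatorConstLp 2 hm hf (1:ℂ)
        = indicatorConstLp 2 MeasurableSet.empty hf (1:ℂ) := rfl
    rw [this]
    convert Submodule.zero_mem (Mspan k)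
    exact I_empty _
  | succ m ih =>
    intro L hL hrect hm hf
    rcases L with _ | ⟨B, L'⟩
    · simp at hL
    have hB : IsRectE B := hrect B (List.mem_cons_self)
    have hL' : ∀ A ∈ L', IsRectE A := fun A hA => hrect A (List.mem_cons_of_mem B hA)
    have hmB : MeasurableSet B := hB.measurable
    have hmL' : MeasurableSet (LU L') := LU_measurable L' fun A hA => (hL' A hA).measurable
    have hfB : volume B ≠ ⊤ := ne_top_of_le_ne_top hf (measure_mono (by rw [LU_cons]; exact Set.subset_union_left))
    have hfL' : volume (LU L') ≠ ⊤ := ne_top_of_le_ne_top hf (measure_mono (by rw [LU_cons]; exact Set.subset_union_right))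
    have hfI : volume (B ∩ LU L') ≠ ⊤ :=
      ne_top_of_le_ne_top hfB (measure_mono Set.inter_subset_left)
    have key : indicatorConstLp 2 hm hf (1:ℂ)
        = indicatorConstLp 2 hmB hfB 1 + indicatorConstLp 2 hmL' hfL' 1
          - indicatorConstLp 2 (hmB.inter hmL') hfI 1 := by
      have := I_union (μ := (volume : Measure (Fin k → ℝ))) hmB hmL' hfB hfL'
        (by rw [← LU_cons]; exact hf) hfI
      exact this
    rw [key]
    have m1 : indicatorConstLp 2 hmB hfB (1:ℂ) ∈ Mspan k := rectE_indicator_mem hB hmB hfB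
    have m2 : indicatorConstLp 2 hmL' hfL' (1:ℂ) ∈ Mspan k :=
      ih L' (by simpa using hL) hL' hmL' hfL'
    have m3 : indicatorConstLp 2 (hmB.inter hmL') hfI (1:ℂ) ∈ Mspan k := by
      have hdist := LU_inter_distrib B L'
      have hrectI : ∀ A ∈ L'.map (fun A => B ∩ A), IsRectE A := by
        intro A hA
        rw [List.mem_map] at hA
        obtain ⟨C, hC, rfl⟩ := hA
        exact hB.inter (hL' C hC)
      have hmI2 : MeasurableSet (LU (L'.map (fun A => B ∩ A))) := by rw [← hdist]; exact hmB.inter hmL'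
      have hfI2 : volume (LU (L'.map (fun A => B ∩ A))) ≠ ⊤ := by rw [← hdist]; exact hfI
      have := ih (L'.map (fun A => B ∩ A)) (by simpa using hL) hrectI hmI2 hfI2
      convert this using 2 <;> rw [hdist]
    exact Submodule.sub_mem _ (Submodule.add_mem _ m1 m2) m3


lemma LU_append {α : Type*} : ∀ (L1 L2 : List (Set α)), LU (L1 ++ L2) = LU L1 ∪ LU L2
  | [], L2 => by simp [LU_nil, LU_cons]
  | (A :: L1), L2 => by
    rw [List.cons_append, LU_cons, LU_cons, LU_append L1 L2, Set.union_assoc]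

lemma LU_subset {α : Type*} {U : Set α} :
    ∀ (L : List (Set α)), (∀ A ∈ L, A ⊆ U) → LU L ⊆ U
  | [], _ => by simp [LU_nil]
  | (A :: L), h => by
    rw [LU_cons]
    exact Set.union_subset (h A (List.mem_cons_self))
      (LU_subset L fun B hB => h B (List.mem_cons_of_mem A hB))

lemma subset_LU {α : Type*} : ∀ (L : List (Set α)), ∀ A ∈ L, A ⊆ LU L
  | (B :: L), A, hA => by
    rw [LU_cons]
    rcases List.mem_cons.mp hA with rfl | hA'
    · exact Set.subset_union_left
    · exact (subset_LU L A hA').trans Set.subset_union_right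

/-- every open set in ℝᵏ is a countable union of rational boxes -/
lemma open_eq_iUnion_boxes {k : ℕ} (U : Set (Fin k → ℝ)) (hU : IsOpen U) :
    ∃ g : ℕ → Set (Fin k → ℝ), (∀ n, IsRectE (g n)) ∧ (∀ n, g n ⊆ U) ∧ U = ⋃ n, g n := by
  classical
  set box : (Fin k → ℚ) × (Fin k → ℚ) → Set (Fin k → ℝ) :=
    fun p => Set.univ.pi fun j => Set.Ioo ((p.1 j : ℝ)) ((p.2 j : ℝ)) with hbox
  have hboxrect : ∀ p, IsRectE (box p) := by
    intro p
    exact Or.inl ⟨_, fun j => measurableSet_Ioo, fun j => by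
      rw [Real.volume_Ioo]; exact ENNReal.ofReal_ne_top, rfl⟩
  set S := {p : (Fin k → ℚ) × (Fin k → ℚ) // box p ⊆ U} with hS
  have hcover : U = ⋃ p : S, box p.val := by
    apply Set.Subset.antisymm
    · intro x hx
      obtain ⟨ε, hε, hball⟩ := Metric.isOpen_iff.mp hU x hx
      have hq : ∀ j, ∃ q : ℚ, x j - ε < (q : ℝ) ∧ (q : ℝ) < x j :=
        fun j => exists_rat_btwn (by linarith)
      have hr : ∀ j, ∃ r : ℚ, x j < (r : ℝ) ∧ (r : ℝ) < x j + ε :=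
        fun j => exists_rat_btwn (by linarith)
      choose q hq1 hq2 using hq
      choose r hr1 hr2 using hr
      have hsubball : box (q, r) ⊆ Metric.ball x ε := by
        intro y hy
        rw [Metric.mem_ball, dist_pi_lt_iff hε]
        intro j
        have hyj := hy j (Set.mem_univ j)
        simp only [Set.mem_Ioo] at hyj
        rw [Real.dist_eq, abs_sub_lt_iff]
        constructor
        · have := hr2 j; have := hyj.2; linarith
        · have := hq1 j; have := hyj.1; linarith
      refine Set.mem_iUnion.mpr ⟨⟨(q, r), hsubball.trans hball⟩, ?_⟩
      intro j _
      exact Set.mem_Ioo.mpr ⟨hq2 j, hr1 j⟩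
    · exact Set.iUnion_subset fun p => p.2
  rcases isEmpty_or_nonempty S with hemp | hne
  · refine ⟨fun _ => ∅, fun _ => Or.inr rfl, fun _ => Set.empty_subset U, ?_⟩
    rw [hcover, Set.iUnion_of_empty, Set.iUnion_empty]
  · obtain ⟨σ, hσ⟩ := exists_surjective_nat S
    refine ⟨fun n => box (σ n).val, fun n => hboxrect _, fun n => (σ n).2, ?_⟩
    exact hcover.trans (hσ.iUnion_comp (fun p : S => box p.val)).symm

lemma norm_I_sub {α : Type*} [MeasurableSpace α] {μ : Measure α} {s t : Set α}
    (hs : MeasurableSet s) (ht : MeasurableSet t) (hfs : μ s ≠ ⊤) (hft : μ t ≠ ⊤) :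
    ‖indicatorConstLp 2 hs hfs (1:ℂ) - indicatorConstLp 2 ht hft 1‖
      ≤ Real.sqrt ((μ (s \ t)).toReal) + Real.sqrt ((μ (t \ s)).toReal) := by
  have hfst : μ (s \ t) ≠ ⊤ := ne_top_of_le_ne_top hfs (measure_mono Set.diff_subset)
  have hfts : μ (t \ s) ≠ ⊤ := ne_top_of_le_ne_top hft (measure_mono Set.diff_subset)
  have hkey : indicatorConstLp 2 hs hfs (1:ℂ) - indicatorConstLp 2 ht hft 1
      = indicatorConstLp 2 (hs.diff ht) hfst 1 - indicatorConstLp 2 (ht.diff hs) hfts 1 := by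
    apply Lp.ext
    filter_upwards [Lp.coeFn_sub (indicatorConstLp 2 hs hfs (1:ℂ)) (indicatorConstLp 2 ht hft 1),
      Lp.coeFn_sub (indicatorConstLp 2 (hs.diff ht) hfst (1:ℂ)) (indicatorConstLp 2 (ht.diff hs) hfts 1),
      indicatorConstLp_coeFn (μ := μ) (hs := hs) (hμs := hfs) (c := (1:ℂ)),
      indicatorConstLp_coeFn (μ := μ) (hs := ht) (hμs := hft) (c := (1:ℂ)),
      indicatorConstLp_coeFn (μ := μ) (hs := hs.diff ht) (hμs := hfst) (c := (1:ℂ)),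
      indicatorConstLp_coeFn (μ := μ) (hs := ht.diff hs) (hμs := hfts) (c := (1:ℂ))]
      with x e1 e2 e3 e4 e5 e6
    rw [e1, e2, Pi.sub_apply, Pi.sub_apply, e3, e4, e5, e6]
    by_cases hxs : x ∈ s <;> by_cases hxt : x ∈ t <;>
      simp [Set.indicator_apply, hxs, hxt]
  rw [hkey]
  refine (norm_sub_le _ _).trans ?_
  rw [norm_indicatorConstLp (by norm_num) (by norm_num),
    norm_indicatorConstLp (by norm_num) (by norm_num)]
  simp only [norm_one, one_mul]
  have h2 : (1 : ℝ) / (2 : ENNReal).toReal = 1/2 := by norm_num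
  rw [h2, ← Real.sqrt_eq_rpow, ← Real.sqrt_eq_rpow]
  exact le_rfl

lemma indicator_mem_Mspan {k : ℕ} {s : Set (Fin k → ℝ)} (hs : MeasurableSet s)
    (hμs : volume s ≠ ⊤) : indicatorConstLp 2 hs hμs (1:ℂ) ∈ Mspan k := by
  have hclosed : IsClosed ((Mspan k : Submodule ℂ (Hsp k)) : Set (Hsp k)) :=
    (Submodule.span ℂ (Tset k)).isClosed_topologicalClosure
  suffices h : indicatorConstLp 2 hs hμs (1:ℂ) ∈ closure ((Mspan k : Submodule ℂ (Hsp k)) : Set (Hsp k)) by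
    rwa [hclosed.closure_eq] at h
  rw [Metric.mem_closure_iff]
  intro ε hε
  set η := (ε/4)^2 with hηdef
  have hηpos : 0 < η := by positivity
  set δ := ENNReal.ofReal η with hδdef
  have hδ0 : δ ≠ 0 := (ENNReal.ofReal_pos.mpr hηpos).ne'
  obtain ⟨U, hUo, hUfin, hUs⟩ := hs.exists_isOpen_symmDiff_lt hμs hδ0
  obtain ⟨g, hgrect, hgsub, hgU⟩ := open_eq_iUnion_boxes U hUo
  set L : ℕ → List (Set (Fin k → ℝ)) := fun m => (List.range m).map g with hLdef
  have hLmem : ∀ m, ∀ A ∈ L m, IsRectE A := by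
    intro m A hA
    rw [hLdef, List.mem_map] at hA
    obtain ⟨i, _, rfl⟩ := hA
    exact hgrect i
  set u : ℕ → Set (Fin k → ℝ) := fun m => LU (L m) with hudef
  have humeas : ∀ m, MeasurableSet (u m) :=
    fun m => LU_measurable _ (fun A hA => (hLmem m A hA).measurable)
  have husub : ∀ m, u m ⊆ U := by
    intro m
    refine LU_subset _ fun A hA => ?_
    rw [hLdef, List.mem_map] at hA
    obtain ⟨i, _, rfl⟩ := hA
    exact hgsub i
  have humono : Monotone u := by
    intro m m' hmm
    refine LU_subset _ fun A hA => subset_LU _ A ?_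
    rw [hLdef, List.mem_map] at hA ⊢
    obtain ⟨i, hi, rfl⟩ := hA
    exact ⟨i, by rw [List.mem_range] at hi ⊢; omega, rfl⟩
  have hucup : (⋃ m, u m) = U := by
    apply Set.Subset.antisymm
    · exact Set.iUnion_subset husub
    · rw [hgU]
      refine Set.iUnion_subset fun n => ?_
      refine (subset_LU (L (n+1)) (g n) ?_).trans (Set.subset_iUnion u (n+1))
      rw [hLdef, List.mem_map]
      exact ⟨n, by rw [List.mem_range]; omega, rfl⟩
  have htend : Filter.Tendsto (fun m => volume (U \ u m)) Filter.atTop (nhds 0) := by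
    have h0 : (⋂ m, U \ u m) = ∅ := by
      rw [← Set.diff_iUnion, hucup, Set.diff_self]
    have := tendsto_measure_iInter_atTop (μ := (volume : Measure (Fin k → ℝ)))
      (s := fun m => U \ u m)
      (fun m => (hUo.measurableSet.diff (humeas m)).nullMeasurableSet)
      (fun m m' hmm => Set.diff_subset_diff_right (humono hmm))
      ⟨0, ne_top_of_le_ne_top hUfin.ne (measure_mono Set.diff_subset)⟩
    rwa [h0, measure_empty] at this
  obtain ⟨m, hm⟩ := (htend.eventually_lt_const (ENNReal.ofReal_pos.mpr hηpos)).exists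
  set A := u m with hAdef
  have hmA : MeasurableSet A := humeas m
  have hfA : volume A ≠ ⊤ := ne_top_of_le_ne_top hUfin.ne (measure_mono (husub m))
  refine ⟨indicatorConstLp 2 hmA hfA 1, ?_, ?_⟩
  · exact LU_indicator_mem (L m).length (L m) rfl (hLmem m) hmA hfA
  · rw [dist_eq_norm]
    refine lt_of_le_of_lt (norm_I_sub hs hmA hμs hfA) ?_
    have hsymm : volume (symmDiff U s) < δ := hUs
    have hbd1 : volume (A \ s) ≤ δ := by
      refine le_trans (measure_mono ?_) hsymm.le
      rw [Set.symmDiff_def]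
      exact (Set.diff_subset_diff_left (husub m)).trans Set.subset_union_left
    have hbd2 : volume (s \ A) ≤ δ + δ := by
      have hsub : s \ A ⊆ (s \ U) ∪ (U \ A) := by
        intro x ⟨hxs, hxA⟩
        by_cases hxU : x ∈ U
        · exact Or.inr ⟨hxU, hxA⟩
        · exact Or.inl ⟨hxs, hxU⟩
      refine le_trans (measure_mono hsub) ((measure_union_le _ _).trans ?_)
      refine add_le_add ?_ hm.le
      refine le_trans (measure_mono ?_) hsymm.le
      rw [Set.symmDiff_def]
      exact Set.subset_union_right
    have ht1 : (volume (s \ A)).toReal ≤ (ε/2)^2 := by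
      have hdd : δ + δ ≤ ENNReal.ofReal ((ε/2)^2) := by
        rw [hδdef, ← ENNReal.ofReal_add hηpos.le hηpos.le]
        refine ENNReal.ofReal_le_ofReal ?_
        rw [hηdef]; nlinarith [sq_nonneg ε]
      refine le_trans (ENNReal.toReal_mono ENNReal.ofReal_ne_top (hbd2.trans hdd)) ?_
      rw [ENNReal.toReal_ofReal (by positivity)]
    have ht2 : (volume (A \ s)).toReal ≤ (ε/4)^2 := by
      refine le_trans (ENNReal.toReal_mono ENNReal.ofReal_ne_top hbd1) ?_
      rw [ENNReal.toReal_ofReal hηpos.le]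
    have hs1 : Real.sqrt ((volume (s \ A)).toReal) ≤ ε/2 := by
      refine le_trans (Real.sqrt_le_sqrt ht1) ?_
      rw [Real.sqrt_sq (by positivity)]
    have hs2 : Real.sqrt ((volume (A \ s)).toReal) ≤ ε/4 := by
      refine le_trans (Real.sqrt_le_sqrt ht2) ?_
      rw [Real.sqrt_sq (by positivity)]
    linarith

lemma dense_tensors (k : ℕ) (f : Hsp k) : f ∈ Mspan k := by
  refine Lp.induction (p := (2:ENNReal)) (μ := (volume : Measure (Fin k → ℝ)))
    (by norm_num) (fun g => g ∈ Mspan k) ?_ ?_ ?_ f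
  · intro c s hs hμs
    rw [Lp.simpleFunc.coe_indicatorConst]
    have h1 : indicatorConstLp 2 hs hμs.ne c = c • indicatorConstLp 2 hs hμs.ne (1:ℂ) := by
      apply Lp.ext
      filter_upwards [indicatorConstLp_coeFn (μ := (volume : Measure (Fin k → ℝ)))
          (hs := hs) (hμs := hμs.ne) (c := c),
        Lp.coeFn_smul c (indicatorConstLp 2 hs hμs.ne (1:ℂ)),
        indicatorConstLp_coeFn (μ := (volume : Measure (Fin k → ℝ)))
          (hs := hs) (hμs := hμs.ne) (c := (1:ℂ))] with x e1 e2 e3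
      rw [e1, e2, Pi.smul_apply, e3]
      by_cases hx : x ∈ s <;> simp [Set.indicator_apply, hx]
    rw [h1]
    exact Submodule.smul_mem _ c (indicator_mem_Mspan hs hμs.ne)
  · intro f g hf hg _ hPf hPg
    exact Submodule.add_mem _ hPf hPg
  · exact (Submodule.span ℂ (Tset k)).isClosed_topologicalClosure

/-- Part (b), as a standalone statement. -/
lemma part_b (D : ∀ k : ℕ, Equiv.Perm (Fin k) →* unitary (Hsp k →L[ℂ] Hsp k))
    (k : ℕ) (ψ : Hsp k) (hψ : symProj (D k) ψ = ψ) :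
    ψ ∈ closure (Submodule.span ℂ
      {x : Hsp k | ∃ (ψs : Fin k → Lp ℂ 2 (volume : Measure ℝ))
        (h : MemLp (fun θ : Fin k → ℝ => ∏ j : Fin k, (ψs j) (θ j)) 2
          (volume : Measure (Fin k → ℝ))),
        x = symProj (D k) (h.toLp _)} : Set (Hsp k)) := by
  set Sset : Set (Hsp k) := {x : Hsp k | ∃ (ψs : Fin k → Lp ℂ 2 (volume : Measure ℝ))
    (h : MemLp (fun θ : Fin k → ℝ => ∏ j : Fin k, (ψs j) (θ j)) 2
      (volume : Measure (Fin k → ℝ))),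
    x = symProj (D k) (h.toLp _)} with hSset
  have h0 : ψ ∈ (⇑(symProj (D k))) '' (closure (Submodule.span ℂ (Tset k) : Set (Hsp k))) :=
    ⟨ψ, dense_tensors k ψ, hψ⟩
  have h1 : (⇑(symProj (D k))) '' (closure (Submodule.span ℂ (Tset k) : Set (Hsp k)))
      ⊆ closure ((⇑(symProj (D k))) '' (Submodule.span ℂ (Tset k) : Set (Hsp k))) :=
    image_closure_subset_closure_image (symProj (D k)).continuous
  have h2 : (⇑(symProj (D k))) '' (Submodule.span ℂ (Tset k) : Set (Hsp k))
      ⊆ (Submodule.span ℂ Sset : Set (Hsp k)) := by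
    rintro _ ⟨y, hy, rfl⟩
    have hmem : (symProj (D k)) y ∈ Submodule.map (symProj (D k) : Hsp k →ₗ[ℂ] Hsp k)
        (Submodule.span ℂ (Tset k)) := Submodule.mem_map_of_mem hy
    rw [Submodule.map_span] at hmem
    refine Submodule.span_mono ?_ hmem
    rintro _ ⟨x, ⟨ψs, h, rfl⟩, rfl⟩
    exact ⟨ψs, h, rfl⟩
  exact closure_mono h2 (h1 h0)

end Stmt11

/-- Cyclicity of the vacuum for the creation operators:
(a) z†(ψ₁)⋯z†(ψₙ)Ω = √(n!)·Pₙ(ψ₁ ⊗ ⋯ ⊗ ψₙ) (the iterated symmetrizations collapse);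
(b) the span of the vectors Pₙ(ψ₁ ⊗ ⋯ ⊗ ψₙ) is dense in ℋₙ = {ψ : Pₙψ = ψ}. -/
theorem statement11 (S₂ : ℝ → ℂ) (hS₂meas : Measurable S₂)
    (hS₂abs : ∀ θ : ℝ, ‖S₂ θ‖ = 1)
    (hS₂sym : ∀ θ : ℝ, S₂ (-θ) = starRingEnd ℂ (S₂ θ))
    (D : ∀ k : ℕ, Equiv.Perm (Fin k) →* unitary (Hsp k →L[ℂ] Hsp k))
    (hD : ∀ k : ℕ, IsZamoRep S₂ k (D k))
    -- the creation operators z†(φ) : ℋₖ → ℋ_{k+1}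
    (zc : ∀ k : ℕ, Lp ℂ 2 (volume : Measure ℝ) → Hsp k → Hsp (k + 1))
    (hzc : ∀ (k : ℕ) (φ : Lp ℂ 2 (volume : Measure ℝ)) (χ : Hsp k),
      ∃ h : MemLp (fun θ : Fin (k + 1) → ℝ => φ (θ 0) * χ (Fin.tail θ)) 2
          (volume : Measure (Fin (k + 1) → ℝ)),
        zc k φ χ = (Real.sqrt (k + 1) : ℂ) • symProj (D (k + 1)) (h.toLp _))
    -- the vacuum vector Ω
    (Ω : Hsp 0) (hΩ : ∀ᵐ θ ∂(volume : Measure (Fin 0 → ℝ)), Ω θ = 1) :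
    (∀ l : List (Lp ℂ 2 (volume : Measure ℝ)),
      ∃ h : MemLp (fun θ : Fin l.length → ℝ => ∏ j : Fin l.length, (l.get j) (θ j)) 2
          (volume : Measure (Fin l.length → ℝ)),
        applyChain zc Ω l
          = (Real.sqrt (l.length.factorial) : ℂ) • symProj (D l.length) (h.toLp _)) ∧
    (∀ (k : ℕ) (ψ : Hsp k), symProj (D k) ψ = ψ →
      ψ ∈ closure (Submodule.span ℂ
        {x : Hsp k | ∃ (ψs : Fin k → Lp ℂ 2 (volume : Measure ℝ))
          (h : MemLp (fun θ : Fin k → ℝ => ∏ j : Fin k, (ψs j) (θ j)) 2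
            (volume : Measure (Fin k → ℝ))),
          x = symProj (D k) (h.toLp _)} : Set (Hsp k))) := by
  constructor
  · intro l
    exact ⟨Stmt11.memℒp_prodf l.length (fun j => l.get j), Stmt11.part_a D hD zc hzc Ω hΩ l⟩
  · intro k ψ hψ
    exact Stmt11.part_b D k ψ hψ

end
end

section
/- The conjugation J implements the space-time reflection: for every n ≥ 1, every a ∈ ℝ² and λ ∈ ℝ, one has Jₙ ∘ Uₙ(a,λ) ∘ Jₙ = Uₙ(−a, λ) as operators on L²(ℝⁿ, ℂ). -/
open MeasureTheory Complex

noncomputable section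

/-- The product ∏_{1 ≤ i < j ≤ n} S₂(θⱼ − θᵢ). -/
def pairProd (S₂ : ℝ → ℂ) {n : ℕ} (θ : Fin n → ℝ) : ℂ :=
  ∏ p ∈ Finset.univ.filter (fun p : Fin n × Fin n => p.1 < p.2), S₂ (θ p.2 - θ p.1)

/-- The conjugation J implements the space-time reflection:
Jₙ ∘ Uₙ(a,λ) ∘ Jₙ = Uₙ(−a,λ) for every n ≥ 1, a ∈ ℝ² and λ ∈ ℝ. -/
theorem statement13 (S₂ : ℝ → ℂ) (hS₂meas : Measurable S₂)
    (hS₂abs : ∀ θ : ℝ, ‖S₂ θ‖ = 1)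
    (hS₂sym : ∀ θ : ℝ, S₂ (-θ) = starRingEnd ℂ (S₂ θ))
    (m : ℝ) (hm : 0 < m) (a : ℝ × ℝ) (lam : ℝ)
    (n : ℕ) (hn : 1 ≤ n)
    (J : Hsp n → Hsp n)
    (hJ : ∀ ψ : Hsp n, ∀ᵐ θ ∂(volume : Measure (Fin n → ℝ)),
      (J ψ) θ = pairProd S₂ θ * starRingEnd ℂ (ψ θ))
    -- Uₙ(a,λ)
    (U : Hsp n → Hsp n)
    (hU : ∀ ψ : Hsp n, ∀ᵐ θ ∂(volume : Measure (Fin n → ℝ)),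
      (U ψ) θ
        = Complex.exp (Complex.I *
            ((∑ j : Fin n, m * (Real.cosh (θ j) * a.1 - Real.sinh (θ j) * a.2) : ℝ) : ℂ))
            * ψ (fun j => θ j - lam))
    -- Uₙ(−a,λ)
    (U' : Hsp n → Hsp n)
    (hU' : ∀ ψ : Hsp n, ∀ᵐ θ ∂(volume : Measure (Fin n → ℝ)),
      (U' ψ) θ
        = Complex.exp (Complex.I *
            ((∑ j : Fin n, m * (Real.cosh (θ j) * (-a.1) - Real.sinh (θ j) * (-a.2)) : ℝ) : ℂ))
            * ψ (fun j => θ j - lam)) :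
    ∀ ψ : Hsp n, J (U (J ψ)) = U' ψ := by
  intro ψ
  set c : Fin n → ℝ := fun _ => lam with hc
  have hmp : MeasurePreserving (fun θ : Fin n → ℝ => θ - c)
      (volume : Measure (Fin n → ℝ)) volume :=
    measurePreserving_sub_right volume c
  have h1' : ∀ᵐ θ ∂(volume : Measure (Fin n → ℝ)),
      (J ψ) (θ - c) = pairProd S₂ (θ - c) * starRingEnd ℂ (ψ (θ - c)) :=
    hmp.quasiMeasurePreserving.ae (hJ ψ)
  have h2 := hU (J ψ)
  have h3 := hJ (U (J ψ))
  have h4 := hU' ψ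
  apply Lp.ext
  filter_upwards [h1', h2, h3, h4] with θ h1' h2 h3 h4
  have hshift : (fun j => θ j - lam) = θ - c := rfl
  have hpp : pairProd S₂ (θ - c) = pairProd S₂ θ := by
    unfold pairProd
    refine Finset.prod_congr rfl fun p _ => ?_
    simp [Pi.sub_apply, hc]
  have habs : ‖pairProd S₂ θ‖ = 1 := by
    unfold pairProd
    rw [norm_prod]
    exact Finset.prod_eq_one fun p _ => hS₂abs _
  have hunit : pairProd S₂ θ * starRingEnd ℂ (pairProd S₂ θ) = 1 := by
    rw [Complex.mul_conj, Complex.normSq_eq_norm_sq, habs]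
    norm_num
  have hA : Complex.exp (Complex.I *
        ((∑ j : Fin n, m * (Real.cosh (θ j) * (-a.1) - Real.sinh (θ j) * (-a.2)) : ℝ) : ℂ))
      = starRingEnd ℂ (Complex.exp (Complex.I *
        ((∑ j : Fin n, m * (Real.cosh (θ j) * a.1 - Real.sinh (θ j) * a.2) : ℝ) : ℂ))) := by
    rw [← Complex.exp_conj, map_mul, Complex.conj_I, Complex.conj_ofReal]
    have hsum : (∑ j : Fin n, m * (Real.cosh (θ j) * (-a.1) - Real.sinh (θ j) * (-a.2)))
        = -(∑ j : Fin n, m * (Real.cosh (θ j) * a.1 - Real.sinh (θ j) * a.2)) := by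
      rw [← Finset.sum_neg_distrib]
      exact Finset.sum_congr rfl fun j _ => by ring
    rw [hsum, Complex.ofReal_neg]
    ring_nf
    have hsum2 : (∑ x : Fin n, (m * Real.cosh (θ x) * a.1 - m * Real.sinh (θ x) * a.2))
        = ∑ j : Fin n, m * (Real.cosh (θ j) * a.1 - Real.sinh (θ j) * a.2) :=
      Finset.sum_congr rfl fun x _ => by ring
    have hsum3 : (∑ x : Fin n, (m * a.1 * Real.cosh (θ x) - m * a.2 * Real.sinh (θ x)))
        = ∑ j : Fin n, m * (Real.cosh (θ j) * a.1 - Real.sinh (θ j) * a.2) :=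
      Finset.sum_congr rfl fun x _ => by ring
    rw [hsum2, hsum3]
  rw [h3, h4, h2, hshift, h1', hA, hpp, map_mul, map_mul, Complex.conj_conj]
  linear_combination (starRingEnd ℂ (Complex.exp (Complex.I *
      ((∑ j : Fin n, m * (Real.cosh (θ j) * a.1 - Real.sinh (θ j) * a.2) : ℝ) : ℂ))) *
      ψ (θ - c)) * hunit

end
end

section
/- Vanishing commutators between reflected and unreflected operators of the same kind: for φ₁, φ₂ ∈ L²(ℝ, ℂ) and ψ ∈ L²(ℝⁿ, ℂ) with Pₙψ = ψ: (a) P_{n+2}(φ₂ ⊗ P_{n+1}(ψ ⊗ conj(φ₁))) = P_{n+2}(P_{n+1}(φ₂ ⊗ ψ) ⊗ conj(φ₁)) (i.e. [z†(φ₁)', z†(φ₂)] = 0); (b) ∫dθ conj(φ₁(θ)) ∫dθ₀ φ₂(θ₀) ψ(θ₀, θ₁,…,θ_{n−2}, θ) may be contracted in either order: the operator z(φ₁)' given by (z(φ₁)'χ)(…) = √k·∫conj(φ₁(θ))χ(…,θ)dθ on ℋ_k commutes with z(φ₂) given by (z(φ₂)χ)(…) = √k·∫φ₂(θ₀)χ(θ₀,…)dθ₀,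 i.e. z(φ₁)'z(φ₂)ψ = z(φ₂)z(φ₁)'ψ. -/
open MeasureTheory Complex
open scoped ENNReal NNReal

noncomputable section

set_option linter.unusedSectionVars false
set_option maxHeartbeats 1000000

namespace Stmt15




/-- cons as a measure-preserving map. -/
lemma mp_cons (k : ℕ) : MeasurePreserving
    (fun p : ℝ × (Fin k → ℝ) => Fin.cons p.1 p.2)
    (((volume : Measure ℝ)).prod (volume : Measure (Fin k → ℝ)))
    (volume : Measure (Fin (k+1) → ℝ)) := by
  have h := (volume_preserving_piFinSuccAbove (fun _ : Fin (k+1) => ℝ) 0).symm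
  have he : ⇑(MeasurableEquiv.piFinSuccAbove (fun _ : Fin (k+1) => ℝ) 0).symm
      = fun p : ℝ × (Fin k → ℝ) => Fin.cons p.1 p.2 := by
    funext p
    simp [MeasurableEquiv.piFinSuccAbove, Fin.consEquiv]
  rwa [he] at h

lemma mp_snoc (k : ℕ) : MeasurePreserving
    (fun p : ℝ × (Fin k → ℝ) => Fin.snoc p.2 p.1)
    (((volume : Measure ℝ)).prod (volume : Measure (Fin k → ℝ)))
    (volume : Measure (Fin (k+1) → ℝ)) := by
  have h := (volume_preserving_piFinSuccAbove (fun _ : Fin (k+1) => ℝ) (Fin.last k)).symm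
  have he : ⇑(MeasurableEquiv.piFinSuccAbove (fun _ : Fin (k+1) => ℝ) (Fin.last k)).symm
      = fun p : ℝ × (Fin k → ℝ) => Fin.snoc p.2 p.1 := by
    funext p
    simp [MeasurableEquiv.piFinSuccAbove, Fin.snocEquiv]
  rwa [he] at h

lemma mp_eval_tail (k : ℕ) : MeasurePreserving
    (fun θ : Fin (k+1) → ℝ => (θ 0, Fin.tail θ))
    (volume : Measure (Fin (k+1) → ℝ))
    (((volume : Measure ℝ)).prod (volume : Measure (Fin k → ℝ))) := by
  have h := volume_preserving_piFinSuccAbove (fun _ : Fin (k+1) => ℝ) 0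
  have he : ⇑(MeasurableEquiv.piFinSuccAbove (fun _ : Fin (k+1) => ℝ) 0)
      = fun θ : Fin (k+1) → ℝ => (θ 0, Fin.tail θ) := by
    funext θ
    simp [MeasurableEquiv.piFinSuccAbove]
  rwa [he] at h

lemma mp_eval_init (k : ℕ) : MeasurePreserving
    (fun θ : Fin (k+1) → ℝ => (θ (Fin.last k), Fin.init θ))
    (volume : Measure (Fin (k+1) → ℝ))
    (((volume : Measure ℝ)).prod (volume : Measure (Fin k → ℝ))) := by
  have h := volume_preserving_piFinSuccAbove (fun _ : Fin (k+1) => ℝ) (Fin.last k)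
  have he : ⇑(MeasurableEquiv.piFinSuccAbove (fun _ : Fin (k+1) => ℝ) (Fin.last k))
      = fun θ : Fin (k+1) → ℝ => (θ (Fin.last k), Fin.init θ) := by
    funext θ
    simp [MeasurableEquiv.piFinSuccAbove]
  rwa [he] at h

lemma qmp_tail (k : ℕ) : Measure.QuasiMeasurePreserving
    (Fin.tail : (Fin (k+1) → ℝ) → (Fin k → ℝ))
    (volume : Measure (Fin (k+1) → ℝ)) (volume : Measure (Fin k → ℝ)) := by
  have : (Fin.tail : (Fin (k+1) → ℝ) → (Fin k → ℝ))
      = Prod.snd ∘ (fun θ : Fin (k+1) → ℝ => (θ 0, Fin.tail θ)) := rfl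
  rw [this]
  exact Measure.quasiMeasurePreserving_snd.comp (mp_eval_tail k).quasiMeasurePreserving

lemma qmp_init (k : ℕ) : Measure.QuasiMeasurePreserving
    (Fin.init : (Fin (k+1) → ℝ) → (Fin k → ℝ))
    (volume : Measure (Fin (k+1) → ℝ)) (volume : Measure (Fin k → ℝ)) := by
  have : (Fin.init : (Fin (k+1) → ℝ) → (Fin k → ℝ))
      = Prod.snd ∘ (fun θ : Fin (k+1) → ℝ => (θ (Fin.last k), Fin.init θ)) := rfl
  rw [this]
  exact Measure.quasiMeasurePreserving_snd.comp (mp_eval_init k).quasiMeasurePreserving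

lemma mp_perm (k : ℕ) (σ : Equiv.Perm (Fin k)) : MeasurePreserving
    (fun θ : Fin k → ℝ => fun m => θ (σ m))
    (volume : Measure (Fin k → ℝ)) (volume : Measure (Fin k → ℝ)) := by
  have h := volume_measurePreserving_piCongrLeft (fun _ : Fin k => ℝ) σ.symm
  have he : ⇑(MeasurableEquiv.piCongrLeft (fun _ : Fin k => ℝ) σ.symm)
      = fun θ : Fin k → ℝ => fun m => θ (σ m) := by
    funext θ j
    have := MeasurableEquiv.piCongrLeft_apply_apply σ.symm (β := fun _ : Fin k => ℝ) θ (σ j)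
    simpa using this
  rwa [he] at h



section ProdMul
variable {α β : Type*} [MeasurableSpace α] [MeasurableSpace β]
  {μ : Measure α} {ν : Measure β} [SigmaFinite μ] [SigmaFinite ν]
  {μ : Measure α} {ν : Measure β} [SigmaFinite μ] [SigmaFinite ν]

lemma eLpNorm_prod_mul {f : α → ℂ} {g : β → ℂ}
    (hf : AEStronglyMeasurable f μ) (hg : AEStronglyMeasurable g ν) :
    eLpNorm (fun p : α × β => f p.1 * g p.2) 2 (μ.prod ν)
      = eLpNorm f 2 μ * eLpNorm g 2 ν := by
  rw [eLpNorm_eq_lintegral_rpow_enorm_toReal two_ne_zero ENNReal.ofNat_ne_top,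
    eLpNorm_eq_lintegral_rpow_enorm_toReal two_ne_zero ENNReal.ofNat_ne_top,
    eLpNorm_eq_lintegral_rpow_enorm_toReal two_ne_zero ENNReal.ofNat_ne_top]
  simp only [ENNReal.toReal_ofNat]
  have hpt : ∀ p : α × β,
      (‖f p.1 * g p.2‖ₑ) ^ (2 : ℝ)
        = (‖f p.1‖ₑ) ^ (2 : ℝ) * (‖g p.2‖ₑ) ^ (2 : ℝ) := by
    intro p
    rw [enorm_mul, ENNReal.mul_rpow_of_nonneg _ _ (by positivity)]
  simp only [hpt]
  rw [lintegral_prod_mul (f := fun a => (‖f a‖ₑ) ^ (2 : ℝ))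
      (g := fun b => (‖g b‖ₑ) ^ (2 : ℝ))
      ((hf.aemeasurable.enorm).pow_const _)
      ((hg.aemeasurable.enorm).pow_const _),
    ENNReal.mul_rpow_of_nonneg _ _ (by positivity)]

lemma memℒp_prod_mul {f : α → ℂ} {g : β → ℂ}
    (hf : MemLp f 2 μ) (hg : MemLp g 2 ν) :
    MemLp (fun p : α × β => f p.1 * g p.2) 2 (μ.prod ν) := by
  refine ⟨AEStronglyMeasurable.mul (f := fun p : α × β => f p.1) (g := fun p : α × β => g p.2)
    (hf.1.comp_fst) (hg.1.comp_snd), ?_⟩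
  rw [eLpNorm_prod_mul hf.1 hg.1]
  exact ENNReal.mul_lt_top hf.2 hg.2


lemma memℒp_prod_mul' {f : α → ℂ} {g : β → ℂ}
    (hf : MemLp f 2 μ) (hg : MemLp g 2 ν) :
    MemLp (fun p : α × β => g p.2 * f p.1) 2 (μ.prod ν) := by
  have : (fun p : α × β => g p.2 * f p.1) = (fun p : α × β => f p.1 * g p.2) := by
    funext p; ring
  rw [this]; exact memℒp_prod_mul hf hg

lemma eLpNorm_prod_mul' {f : α → ℂ} {g : β → ℂ}
    (hf : AEStronglyMeasurable f μ) (hg : AEStronglyMeasurable g ν) :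
    eLpNorm (fun p : α × β => g p.2 * f p.1) 2 (μ.prod ν)
      = eLpNorm f 2 μ * eLpNorm g 2 ν := by
  have : (fun p : α × β => g p.2 * f p.1) = (fun p : α × β => f p.1 * g p.2) := by
    funext p; ring
  rw [this]; exact eLpNorm_prod_mul hf hg

variable {φ f : ℝ → ℂ} {k : ℕ} {g : (Fin k → ℝ) → ℂ}

lemma memℒp_mul_tail (hφ : MemLp φ 2 (volume : Measure ℝ))
    (hg : MemLp g 2 (volume : Measure (Fin k → ℝ))) :
    MemLp (fun θ : Fin (k+1) → ℝ => φ (θ 0) * g (Fin.tail θ)) 2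
      (volume : Measure (Fin (k+1) → ℝ)) :=
  (memℒp_prod_mul hφ hg).comp_measurePreserving (mp_eval_tail k)

lemma eLpNorm_mul_tail (hφ : MemLp φ 2 (volume : Measure ℝ))
    (hg : MemLp g 2 (volume : Measure (Fin k → ℝ))) :
    eLpNorm (fun θ : Fin (k+1) → ℝ => φ (θ 0) * g (Fin.tail θ)) 2
      (volume : Measure (Fin (k+1) → ℝ))
      = eLpNorm φ 2 (volume : Measure ℝ) * eLpNorm g 2 (volume : Measure (Fin k → ℝ)) := by
  rw [show (fun θ : Fin (k+1) → ℝ => φ (θ 0) * g (Fin.tail θ))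
      = (fun p : ℝ × (Fin k → ℝ) => φ p.1 * g p.2) ∘ (fun θ => (θ 0, Fin.tail θ)) from rfl,
    eLpNorm_comp_measurePreserving (memℒp_prod_mul hφ hg).1 (mp_eval_tail k),
    eLpNorm_prod_mul hφ.1 hg.1]

lemma memℒp_init_mul (hφ : MemLp f 2 (volume : Measure ℝ))
    (hg : MemLp g 2 (volume : Measure (Fin k → ℝ))) :
    MemLp (fun θ : Fin (k+1) → ℝ => g (Fin.init θ) * f (θ (Fin.last k))) 2
      (volume : Measure (Fin (k+1) → ℝ)) :=
  (memℒp_prod_mul' hφ hg).comp_measurePreserving (mp_eval_init k)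

lemma eLpNorm_init_mul (hφ : MemLp f 2 (volume : Measure ℝ))
    (hg : MemLp g 2 (volume : Measure (Fin k → ℝ))) :
    eLpNorm (fun θ : Fin (k+1) → ℝ => g (Fin.init θ) * f (θ (Fin.last k))) 2
      (volume : Measure (Fin (k+1) → ℝ))
      = eLpNorm f 2 (volume : Measure ℝ) * eLpNorm g 2 (volume : Measure (Fin k → ℝ)) := by
  rw [show (fun θ : Fin (k+1) → ℝ => g (Fin.init θ) * f (θ (Fin.last k)))
      = (fun p : ℝ × (Fin k → ℝ) => g p.2 * f p.1)
        ∘ (fun θ => (θ (Fin.last k), Fin.init θ)) from rfl,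
    eLpNorm_comp_measurePreserving (memℒp_prod_mul' hφ hg).1 (mp_eval_init k),
    eLpNorm_prod_mul' hφ.1 hg.1]

/-- Tensoring on the left with an `L²(ℝ)` function, as a CLM `Hsp k →L Hsp (k+1)`. -/
def tensorLeft (φL : Lp ℂ 2 (volume : Measure ℝ)) (k : ℕ) : Hsp k →L[ℂ] Hsp (k+1) :=
  LinearMap.mkContinuous
    { toFun := fun χ => (memℒp_mul_tail (Lp.memLp φL) (Lp.memLp χ)).toLp _
      map_add' := by
        intro χ χ'
        rw [← MemLp.toLp_add]
        refine MemLp.toLp_congr _ _ ?_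
        filter_upwards [(qmp_tail k).ae_eq_comp (Lp.coeFn_add χ χ')] with θ hθ
        simp only [Function.comp_apply, Pi.add_apply] at hθ ⊢
        rw [hθ]; ring
      map_smul' := by
        intro c χ
        simp only [RingHom.id_apply]
        refine Eq.trans (MemLp.toLp_congr _
          ((memℒp_mul_tail (Lp.memLp φL) (Lp.memLp χ)).const_smul c) ?_)
          (MemLp.toLp_const_smul c _)
        filter_upwards [(qmp_tail k).ae_eq_comp (Lp.coeFn_smul c χ)] with θ hθ
        simp only [Function.comp_apply, Pi.smul_apply, smul_eq_mul] at hθ ⊢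
        rw [hθ]; ring }
    ‖φL‖
    (by
      intro χ
      rw [LinearMap.coe_mk, AddHom.coe_mk]
      rw [Lp.norm_toLp, eLpNorm_mul_tail (Lp.memLp φL) (Lp.memLp χ),
        ENNReal.toReal_mul, ← Lp.norm_def, ← Lp.norm_def])

lemma tensorLeft_coeFn (φL : Lp ℂ 2 (volume : Measure ℝ)) {k : ℕ} (χ : Hsp k) :
    ⇑(tensorLeft φL k χ) =ᵐ[(volume : Measure (Fin (k+1) → ℝ))]
      fun θ => φL (θ 0) * χ (Fin.tail θ) :=
  MemLp.coeFn_toLp (memℒp_mul_tail (Lp.memLp φL) (Lp.memLp χ))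

/-- Tensoring on the right, as a CLM. -/
def tensorRight (f : ℝ → ℂ) (hf : MemLp f 2 (volume : Measure ℝ)) (k : ℕ) :
    Hsp k →L[ℂ] Hsp (k+1) :=
  LinearMap.mkContinuous
    { toFun := fun χ => (memℒp_init_mul hf (Lp.memLp χ)).toLp _
      map_add' := by
        intro χ χ'
        rw [← MemLp.toLp_add]
        refine MemLp.toLp_congr _ _ ?_
        filter_upwards [(qmp_init k).ae_eq_comp (Lp.coeFn_add χ χ')] with θ hθ
        simp only [Function.comp_apply, Pi.add_apply] at hθ ⊢
        rw [hθ]; ring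
      map_smul' := by
        intro c χ
        simp only [RingHom.id_apply]
        refine Eq.trans (MemLp.toLp_congr _
          ((memℒp_init_mul hf (Lp.memLp χ)).const_smul c) ?_)
          (MemLp.toLp_const_smul c _)
        filter_upwards [(qmp_init k).ae_eq_comp (Lp.coeFn_smul c χ)] with θ hθ
        simp only [Function.comp_apply, Pi.smul_apply, smul_eq_mul] at hθ ⊢
        rw [hθ]; ring }
    ((eLpNorm f 2 (volume : Measure ℝ)).toReal)
    (by
      intro χ
      rw [LinearMap.coe_mk, AddHom.coe_mk]
      rw [Lp.norm_toLp, eLpNorm_init_mul hf (Lp.memLp χ),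
        ENNReal.toReal_mul, ← Lp.norm_def])

lemma tensorRight_coeFn (f : ℝ → ℂ) (hf : MemLp f 2 (volume : Measure ℝ)) {k : ℕ} (χ : Hsp k) :
    ⇑(tensorRight f hf k χ) =ᵐ[(volume : Measure (Fin (k+1) → ℝ))]
      fun θ => χ (Fin.init θ) * f (θ (Fin.last k)) :=
  MemLp.coeFn_toLp (memℒp_init_mul hf (Lp.memLp χ))



end ProdMul


lemma tau_succ (k i : ℕ) (hi : i + 1 < k + 1) (hi' : (i + 1) + 1 < k + 2) (m : Fin (k+1)) :
    tau (k+2) (i+1) hi' m.succ = (tau (k+1) i hi m).succ := by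
  simp only [tau, Equiv.swap_apply_def]
  split_ifs <;> simp_all [Fin.ext_iff] <;> omega

lemma tau_zero (k i : ℕ) (hi' : (i + 1) + 1 < k + 2) : tau (k+2) (i+1) hi' 0 = 0 := by
  simp only [tau]
  refine Equiv.swap_apply_of_ne_of_ne ?_ ?_ <;> simp [Fin.ext_iff]

lemma tau_castSucc (k i : ℕ) (hi : i + 1 < k + 1) (hi' : i + 1 < k + 2) (m : Fin (k+1)) :
    tau (k+2) i hi' m.castSucc = (tau (k+1) i hi m).castSucc := by
  simp only [tau, Equiv.swap_apply_def]
  split_ifs <;> simp_all [Fin.ext_iff] <;> omega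

lemma tau_last (k i : ℕ) (hi : i + 1 < k + 1) (hi' : i + 1 < k + 2) :
    tau (k+2) i hi' (Fin.last (k+1)) = Fin.last (k+1) := by
  simp only [tau]
  refine Equiv.swap_apply_of_ne_of_ne ?_ ?_ <;> simp [Fin.ext_iff] <;> omega

/-- `Fin (k+1)` as the nonzero elements of `Fin (k+2)`. -/
def eLeq (k : ℕ) : Fin (k+1) ≃ {j : Fin (k+2) // j ≠ 0} where
  toFun i := ⟨i.succ, Fin.succ_ne_zero i⟩
  invFun j := j.1.pred j.2
  left_inv i := by simp
  right_inv j := by simp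

/-- `Fin (k+1)` as the non-last elements of `Fin (k+2)`. -/
def eReq (k : ℕ) : Fin (k+1) ≃ {j : Fin (k+2) // j ≠ Fin.last (k+1)} where
  toFun i := ⟨i.castSucc, (Fin.castSucc_lt_last i).ne⟩
  invFun j := j.1.castPred j.2
  left_inv i := by simp
  right_inv j := by simp

def EL (k : ℕ) : Equiv.Perm (Fin (k+1)) →* Equiv.Perm (Fin (k+2)) :=
  Equiv.Perm.extendDomainHom (eLeq k)

def ER (k : ℕ) : Equiv.Perm (Fin (k+1)) →* Equiv.Perm (Fin (k+2)) :=
  Equiv.Perm.extendDomainHom (eReq k)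

lemma EL_apply_succ {k : ℕ} (σ : Equiv.Perm (Fin (k+1))) (m : Fin (k+1)) :
    EL k σ m.succ = (σ m).succ :=
  σ.extendDomain_apply_image (eLeq k) m

lemma EL_apply_zero {k : ℕ} (σ : Equiv.Perm (Fin (k+1))) : EL k σ 0 = 0 :=
  σ.extendDomain_apply_not_subtype _ (by simp)

lemma ER_apply_castSucc {k : ℕ} (σ : Equiv.Perm (Fin (k+1))) (m : Fin (k+1)) :
    ER k σ m.castSucc = (σ m).castSucc :=
  σ.extendDomain_apply_image (eReq k) m

lemma ER_apply_last {k : ℕ} (σ : Equiv.Perm (Fin (k+1))) : ER k σ (Fin.last (k+1)) = Fin.last (k+1) :=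
  σ.extendDomain_apply_not_subtype _ (by simp)

lemma EL_tau (k i : ℕ) (hi : i + 1 < k + 1) :
    EL k (tau (k+1) i hi) = tau (k+2) (i+1) (by omega) := by
  apply Equiv.ext
  intro j
  induction j using Fin.cases with
  | zero => rw [EL_apply_zero, tau_zero]
  | succ m => rw [EL_apply_succ, tau_succ k i hi]

lemma ER_tau (k i : ℕ) (hi : i + 1 < k + 1) :
    ER k (tau (k+1) i hi) = tau (k+2) i (by omega) := by
  apply Equiv.ext
  intro j
  induction j using Fin.lastCases with
  | last => rw [ER_apply_last, tau_last k i hi]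
  | cast m => rw [ER_apply_castSucc, tau_castSucc k i hi]


section Algebra

variable {k a b : ℕ}

lemma D_apply_mul (D : Equiv.Perm (Fin k) →* unitary (Hsp k →L[ℂ] Hsp k))
    (π π' : Equiv.Perm (Fin k)) (v : Hsp k) :
    ((D (π * π') : Hsp k →L[ℂ] Hsp k)) v
      = (D π : Hsp k →L[ℂ] Hsp k) ((D π' : Hsp k →L[ℂ] Hsp k) v) := by
  rw [map_mul]
  rfl

lemma absorb (D : Equiv.Perm (Fin k) →* unitary (Hsp k →L[ℂ] Hsp k))
    (π : Equiv.Perm (Fin k)) (v : Hsp k) :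
    symProj D ((D π : Hsp k →L[ℂ] Hsp k) v) = symProj D v := by
  simp only [symProj, ContinuousLinearMap.smul_apply, ContinuousLinearMap.coe_sum',
    Finset.sum_apply]
  congr 1
  rw [← Equiv.sum_comp (Equiv.mulRight π)
    (fun π' => (D π' : Hsp k →L[ℂ] Hsp k) v)]
  refine Finset.sum_congr rfl fun π' _ => ?_
  rw [Equiv.coe_mulRight, D_apply_mul]

lemma absorb_sum (Da : Equiv.Perm (Fin a) →* unitary (Hsp a →L[ℂ] Hsp a))
    (Db : Equiv.Perm (Fin b) →* unitary (Hsp b →L[ℂ] Hsp b))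
    (T : Hsp a →L[ℂ] Hsp b) (E : Equiv.Perm (Fin a) →* Equiv.Perm (Fin b))
    (hint : ∀ (σ : Equiv.Perm (Fin a)) (χ : Hsp a),
      T ((Da σ : Hsp a →L[ℂ] Hsp a) χ) = (Db (E σ) : Hsp b →L[ℂ] Hsp b) (T χ))
    (χ : Hsp a) :
    symProj Db (T (symProj Da χ)) = symProj Db (T χ) := by
  have h1 : symProj Da χ
      = ((a.factorial : ℂ))⁻¹ • ∑ σ : Equiv.Perm (Fin a), (Da σ : Hsp a →L[ℂ] Hsp a) χ := by
    simp [symProj, ContinuousLinearMap.smul_apply, ContinuousLinearMap.coe_sum',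
      Finset.sum_apply]
  rw [h1, _root_.map_smul, map_sum, _root_.map_smul, map_sum]
  have h2 : ∀ σ : Equiv.Perm (Fin a),
      symProj Db (T ((Da σ : Hsp a →L[ℂ] Hsp a) χ)) = symProj Db (T χ) := fun σ => by
    rw [hint σ χ, absorb]
  rw [Finset.sum_congr rfl (fun σ _ => h2 σ), Finset.sum_const, Finset.card_univ,
    Fintype.card_perm, Fintype.card_fin, ← Nat.cast_smul_eq_nsmul ℂ, smul_smul,
    inv_mul_cancel₀ (Nat.cast_ne_zero.mpr (Nat.factorial_ne_zero a)), one_smul]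

end Algebra

section Intertwine

variable {S₂ : ℝ → ℂ} {D : ∀ k : ℕ, Equiv.Perm (Fin k) →* unitary (Hsp k →L[ℂ] Hsp k)}

lemma intertwineL_gen (hD : ∀ k : ℕ, IsZamoRep S₂ k (D k))
    (φL : Lp ℂ 2 (volume : Measure ℝ)) (m i : ℕ) (hi : i + 1 < m + 1)
    (hi' : (i + 1) + 1 < m + 2) (χ : Hsp (m+1)) :
    tensorLeft φL (m+1) ((D (m+1) (tau (m+1) i hi) : Hsp (m+1) →L[ℂ] Hsp (m+1)) χ)
      = (D (m+2) (tau (m+2) (i+1) hi') : Hsp (m+2) →L[ℂ] Hsp (m+2))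
          (tensorLeft φL (m+1) χ) := by
  apply Lp.ext
  have A1 := tensorLeft_coeFn φL
    ((D (m+1) (tau (m+1) i hi) : Hsp (m+1) →L[ℂ] Hsp (m+1)) χ)
  have A2 := (qmp_tail (m+1)).ae_eq_comp (hD (m+1) i hi χ)
  have B1 := hD (m+2) (i+1) hi' (tensorLeft φL (m+1) χ)
  have B2 := (mp_perm (m+2) (tau (m+2) (i+1) hi')).quasiMeasurePreserving.ae_eq_comp
    (tensorLeft_coeFn φL χ)
  filter_upwards [A1, A2, B1, B2] with θ h1 h2 h3 h4
  simp only [Function.comp_apply] at h2 h4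
  rw [h1, h3, h2, h4]
  have hgt : Fin.tail (fun m' => θ (tau (m+2) (i+1) hi' m'))
      = fun m' => Fin.tail θ (tau (m+1) i hi m') :=
    funext fun j => congrArg θ (tau_succ m i hi hi' j)
  have hg0 : θ (tau (m+2) (i+1) hi' 0) = θ 0 :=
    congrArg θ (tau_zero m i hi')
  rw [hgt, hg0]
  have e1 : Fin.tail θ ⟨i + 1, hi⟩ = θ ⟨i + 1 + 1, hi'⟩ := rfl
  have e2 : Fin.tail θ ⟨i, Nat.lt_of_succ_lt hi⟩ = θ ⟨i + 1, Nat.lt_of_succ_lt hi'⟩ := rfl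
  rw [e1, e2]
  ring

lemma intertwineR_gen (hD : ∀ k : ℕ, IsZamoRep S₂ k (D k))
    (f : ℝ → ℂ) (hf : MemLp f 2 (volume : Measure ℝ)) (m i : ℕ) (hi : i + 1 < m + 1)
    (hi' : i + 1 < m + 2) (χ : Hsp (m+1)) :
    tensorRight f hf (m+1) ((D (m+1) (tau (m+1) i hi) : Hsp (m+1) →L[ℂ] Hsp (m+1)) χ)
      = (D (m+2) (tau (m+2) i hi') : Hsp (m+2) →L[ℂ] Hsp (m+2))
          (tensorRight f hf (m+1) χ) := by
  apply Lp.ext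
  have A1 := tensorRight_coeFn f hf
    ((D (m+1) (tau (m+1) i hi) : Hsp (m+1) →L[ℂ] Hsp (m+1)) χ)
  have A2 := (qmp_init (m+1)).ae_eq_comp (hD (m+1) i hi χ)
  have B1 := hD (m+2) i hi' (tensorRight f hf (m+1) χ)
  have B2 := (mp_perm (m+2) (tau (m+2) i hi')).quasiMeasurePreserving.ae_eq_comp
    (tensorRight_coeFn f hf χ)
  filter_upwards [A1, A2, B1, B2] with θ h1 h2 h3 h4
  simp only [Function.comp_apply] at h2 h4
  rw [h1, h3, h2, h4]
  have hgi : Fin.init (fun m' => θ (tau (m+2) i hi' m'))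
      = fun m' => Fin.init θ (tau (m+1) i hi m') :=
    funext fun j => congrArg θ (tau_castSucc m i hi hi' j)
  have hglast : θ (tau (m+2) i hi' (Fin.last (m+1))) = θ (Fin.last (m+1)) :=
    congrArg θ (tau_last m i hi hi')
  rw [hgi, hglast]
  have e1 : Fin.init θ ⟨i + 1, hi⟩ = θ ⟨i + 1, hi'⟩ := rfl
  have e2 : Fin.init θ ⟨i, Nat.lt_of_succ_lt hi⟩ = θ ⟨i, Nat.lt_of_succ_lt hi'⟩ := rfl
  rw [e1, e2]
  ring

lemma swap_eq_tau (m : ℕ) (i : Fin m) :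
    Equiv.swap i.castSucc i.succ = tau (m+1) i.val (by omega) := by
  rw [tau]
  congr 1 <;> exact Fin.ext rfl

lemma intertwineL' (hD : ∀ k : ℕ, IsZamoRep S₂ k (D k))
    (φL : Lp ℂ 2 (volume : Measure ℝ)) (m : ℕ) (σ : Equiv.Perm (Fin (m+1)))
    (χ : Hsp (m+1)) :
    tensorLeft φL (m+1) ((D (m+1) σ : Hsp (m+1) →L[ℂ] Hsp (m+1)) χ)
      = (D (m+2) (EL m σ) : Hsp (m+2) →L[ℂ] Hsp (m+2)) (tensorLeft φL (m+1) χ) := by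
  have hmem : σ ∈ Submonoid.closure
      (Set.range fun i : Fin m => Equiv.swap i.castSucc i.succ) := by
    rw [Equiv.Perm.mclosure_swap_castSucc_succ]; trivial
  revert χ
  induction hmem using Submonoid.closure_induction with
  | mem x hx =>
    obtain ⟨i, rfl⟩ := hx
    intro χ
    beta_reduce
    rw [swap_eq_tau, EL_tau]
    exact intertwineL_gen hD φL m i.val (by omega) (by omega) χ
  | one =>
    intro χ
    simp only [map_one, OneMemClass.coe_one, ContinuousLinearMap.one_apply]
  | mul x y hx hy ihx ihy =>
    intro χ
    rw [D_apply_mul, ihx, ihy, ← D_apply_mul, ← map_mul]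

lemma intertwineR' (hD : ∀ k : ℕ, IsZamoRep S₂ k (D k))
    (f : ℝ → ℂ) (hf : MemLp f 2 (volume : Measure ℝ)) (m : ℕ)
    (σ : Equiv.Perm (Fin (m+1))) (χ : Hsp (m+1)) :
    tensorRight f hf (m+1) ((D (m+1) σ : Hsp (m+1) →L[ℂ] Hsp (m+1)) χ)
      = (D (m+2) (ER m σ) : Hsp (m+2) →L[ℂ] Hsp (m+2)) (tensorRight f hf (m+1) χ) := by
  have hmem : σ ∈ Submonoid.closure
      (Set.range fun i : Fin m => Equiv.swap i.castSucc i.succ) := by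
    rw [Equiv.Perm.mclosure_swap_castSucc_succ]; trivial
  revert χ
  induction hmem using Submonoid.closure_induction with
  | mem x hx =>
    obtain ⟨i, rfl⟩ := hx
    intro χ
    beta_reduce
    rw [swap_eq_tau, ER_tau]
    exact intertwineR_gen hD f hf m i.val (by omega) (by omega) χ
  | one =>
    intro χ
    simp only [map_one, OneMemClass.coe_one, ContinuousLinearMap.one_apply]
  | mul x y hx hy ihx ihy =>
    intro χ
    rw [D_apply_mul, ihx, ihy, ← D_apply_mul, ← map_mul]

lemma proj_tensorLeft (hD : ∀ k : ℕ, IsZamoRep S₂ k (D k))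
    (φL : Lp ℂ 2 (volume : Measure ℝ)) (m : ℕ) (χ : Hsp (m+1)) :
    symProj (D (m+2)) (tensorLeft φL (m+1) (symProj (D (m+1)) χ))
      = symProj (D (m+2)) (tensorLeft φL (m+1) χ) :=
  absorb_sum (D (m+1)) (D (m+2)) (tensorLeft φL (m+1)) (EL m)
    (fun σ χ' => intertwineL' hD φL m σ χ') χ

lemma proj_tensorRight (hD : ∀ k : ℕ, IsZamoRep S₂ k (D k))
    (f : ℝ → ℂ) (hf : MemLp f 2 (volume : Measure ℝ)) (m : ℕ) (χ : Hsp (m+1)) :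
    symProj (D (m+2)) (tensorRight f hf (m+1) (symProj (D (m+1)) χ))
      = symProj (D (m+2)) (tensorRight f hf (m+1) χ) :=
  absorb_sum (D (m+1)) (D (m+2)) (tensorRight f hf (m+1)) (ER m)
    (fun σ χ' => intertwineR' hD f hf m σ χ') χ

end Intertwine

end Stmt15

/-- Vanishing commutators between reflected and unreflected
operators of the same kind: (a) [z†(φ₁)', z†(φ₂)] = 0, i.e.
P_{n+2}(φ₂ ⊗ P_{n+1}(ψ ⊗ conj φ₁)) = P_{n+2}(P_{n+1}(φ₂ ⊗ ψ) ⊗ conj φ₁);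
(b) [z(φ₁)', z(φ₂)] = 0, i.e. the two contractions may be performed in either order
(stated for a symmetric vector of arity n+2). -/
theorem statement15 (S₂ : ℝ → ℂ) (hS₂meas : Measurable S₂)
    (hS₂abs : ∀ θ : ℝ, ‖S₂ θ‖ = 1)
    (hS₂sym : ∀ θ : ℝ, S₂ (-θ) = starRingEnd ℂ (S₂ θ))
    (n : ℕ)
    (D : ∀ k : ℕ, Equiv.Perm (Fin k) →* unitary (Hsp k →L[ℂ] Hsp k))
    (hD : ∀ k : ℕ, IsZamoRep S₂ k (D k))
    (φ₁ φ₂ : Lp ℂ 2 (volume : Measure ℝ)) :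
    -- (a) creation operators: [z†(φ₁)', z†(φ₂)] = 0
    (∀ ψ : Hsp n, symProj (D n) ψ = ψ →
      ∃ (h1 : MemLp (fun θ : Fin (n + 1) → ℝ =>
            ψ (Fin.init θ) * starRingEnd ℂ (φ₁ (θ (Fin.last n)))) 2
          (volume : Measure (Fin (n + 1) → ℝ)))
        (h2 : MemLp (fun θ : Fin (n + 2) → ℝ =>
            φ₂ (θ 0) * (symProj (D (n + 1)) (h1.toLp _)) (Fin.tail θ)) 2
          (volume : Measure (Fin (n + 2) → ℝ)))
        (h3 : MemLp (fun θ : Fin (n + 1) → ℝ => φ₂ (θ 0) * ψ (Fin.tail θ)) 2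
          (volume : Measure (Fin (n + 1) → ℝ)))
        (h4 : MemLp (fun θ : Fin (n + 2) → ℝ =>
            (symProj (D (n + 1)) (h3.toLp _)) (Fin.init θ) *
              starRingEnd ℂ (φ₁ (θ (Fin.last (n + 1))))) 2
          (volume : Measure (Fin (n + 2) → ℝ))),
        symProj (D (n + 2)) (h2.toLp _) = symProj (D (n + 2)) (h4.toLp _)) ∧
    -- (b) annihilation operators: z(φ₁)'z(φ₂)ψ = z(φ₂)z(φ₁)'ψ
    (∀ ψ : Hsp (n + 2), symProj (D (n + 2)) ψ = ψ →
      ∀ᵐ θ ∂(volume : Measure (Fin n → ℝ)),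
        (Real.sqrt (n + 1) : ℂ) * (Real.sqrt (n + 2) : ℂ) *
            ∫ t : ℝ, starRingEnd ℂ (φ₁ t) *
              ∫ s : ℝ, φ₂ s * ψ (Fin.cons s (Fin.snoc θ t))
          = (Real.sqrt (n + 1) : ℂ) * (Real.sqrt (n + 2) : ℂ) *
              ∫ s : ℝ, φ₂ s *
                ∫ t : ℝ, starRingEnd ℂ (φ₁ t) * ψ (Fin.snoc (Fin.cons s θ) t)) := by
  classical
  have hφ1c : MemLp (fun t : ℝ => starRingEnd ℂ (φ₁ t)) 2 (volume : Measure ℝ) := by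
    refine MemLp.of_le (Lp.memLp φ₁)
      (continuous_star.comp_aestronglyMeasurable (Lp.memLp φ₁).1) ?_
    exact Filter.Eventually.of_forall fun t => by simp
  constructor
  · -- part (a)
    intro ψ hψ
    refine ⟨Stmt15.memℒp_init_mul hφ1c (Lp.memLp ψ), ?_, ?_, ?_, ?_⟩
    · exact Stmt15.memℒp_mul_tail (Lp.memLp φ₂) (Lp.memLp _)
    · exact Stmt15.memℒp_mul_tail (Lp.memLp φ₂) (Lp.memLp ψ)
    · exact Stmt15.memℒp_init_mul hφ1c (Lp.memLp _)
    · -- the actual commutation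
      have E1 : (Stmt15.memℒp_init_mul hφ1c (Lp.memLp ψ)).toLp _
          = Stmt15.tensorRight _ hφ1c n ψ := rfl
      have E2 : (Stmt15.memℒp_mul_tail (Lp.memLp φ₂)
            (Lp.memLp (symProj (D (n+1))
              ((Stmt15.memℒp_init_mul hφ1c (Lp.memLp ψ)).toLp _)))).toLp _
          = Stmt15.tensorLeft φ₂ (n+1)
              (symProj (D (n+1)) (Stmt15.tensorRight _ hφ1c n ψ)) := rfl
      have E3 : (Stmt15.memℒp_mul_tail (Lp.memLp φ₂) (Lp.memLp ψ)).toLp _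
          = Stmt15.tensorLeft φ₂ n ψ := rfl
      have E4 : (Stmt15.memℒp_init_mul hφ1c
            (Lp.memLp (symProj (D (n+1))
              ((Stmt15.memℒp_mul_tail (Lp.memLp φ₂) (Lp.memLp ψ)).toLp _)))).toLp _
          = Stmt15.tensorRight _ hφ1c (n+1)
              (symProj (D (n+1)) (Stmt15.tensorLeft φ₂ n ψ)) := rfl
      rw [E2, E4, Stmt15.proj_tensorLeft hD φ₂ n, Stmt15.proj_tensorRight hD _ hφ1c n]
      congr 1
      apply Lp.ext
      filter_upwards [Stmt15.tensorLeft_coeFn φ₂ (Stmt15.tensorRight _ hφ1c n ψ),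
        (Stmt15.qmp_tail (n+1)).ae_eq_comp (Stmt15.tensorRight_coeFn _ hφ1c ψ),
        Stmt15.tensorRight_coeFn _ hφ1c (Stmt15.tensorLeft φ₂ n ψ),
        (Stmt15.qmp_init (n+1)).ae_eq_comp (Stmt15.tensorLeft_coeFn φ₂ ψ)]
        with θ h1 h2 h3 h4
      simp only [Function.comp_apply] at h2 h4
      rw [h1, h2, h3, h4]
      have e1 : Fin.init (Fin.tail θ) = Fin.tail (Fin.init θ) :=
        funext fun j => congrArg θ (Fin.succ_castSucc j)
      have e2 : Fin.tail θ (Fin.last n) = θ (Fin.last (n+1)) :=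
        congrArg θ (Fin.succ_last n)
      have e3 : Fin.init θ 0 = θ 0 := congrArg θ (Fin.castSucc_zero' : _)
      rw [e1, e2, e3]
      ring
  · -- part (b)
    intro ψ _
    have hg : MeasurePreserving
        (fun p : (Fin n → ℝ) × ℝ × ℝ => Fin.cons p.2.1 (Fin.snoc p.1 p.2.2))
        ((volume : Measure (Fin n → ℝ)).prod ((volume : Measure ℝ).prod volume))
        (volume : Measure (Fin (n+2) → ℝ)) := by
      have h1 := Stmt15.mp_cons (n+1)
      have h2 := Stmt15.mp_snoc n
      have h3 := measurePreserving_prodAssoc (volume : Measure ℝ) (volume : Measure ℝ)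
        (volume : Measure (Fin n → ℝ))
      have h4 := Measure.measurePreserving_swap
        (μ := (volume : Measure (Fin n → ℝ)))
        (ν := (volume : Measure ℝ).prod (volume : Measure ℝ))
      exact h1.comp (((MeasurePreserving.id (volume : Measure ℝ)).prod h2).comp (h3.comp h4))
    have hψm : Measurable (⇑ψ : (Fin (n+2) → ℝ) → ℂ) := (Lp.stronglyMeasurable ψ).measurable
    set F : (Fin n → ℝ) × ℝ × ℝ → ℂ :=
      fun p => ψ (Fin.cons p.2.1 (Fin.snoc p.1 p.2.2)) with hFdef
    have hF : MemLp F 2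
        ((volume : Measure (Fin n → ℝ)).prod ((volume : Measure ℝ).prod volume)) :=
      (Lp.memLp ψ).comp_measurePreserving hg
    have hFm : Measurable F := hψm.comp hg.measurable
    set u : (Fin n → ℝ) × ℝ × ℝ → ℝ≥0∞ := fun p => (‖F p‖ₑ) ^ (2 : ℝ) with hudef
    have hu_meas : Measurable u := hFm.enorm.pow_const _
    have hu_fin : ∫⁻ p, u p
        ∂((volume : Measure (Fin n → ℝ)).prod ((volume : Measure ℝ).prod volume)) ≠ ∞ := by
      have h := hF.2
      rw [eLpNorm_eq_lintegral_rpow_enorm_toReal two_ne_zero ENNReal.ofNat_ne_top] at h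
      simp only [ENNReal.toReal_ofNat] at h
      rw [ENNReal.rpow_lt_top_iff_of_pos (by norm_num)] at h
      exact h.ne
    have hslice : ∀ᵐ θ ∂(volume : Measure (Fin n → ℝ)),
        (∫⁻ st : ℝ × ℝ, u (θ, st) ∂((volume : Measure ℝ).prod volume)) < ∞ := by
      refine ae_lt_top (hu_meas.lintegral_prod_right') ?_
      rw [← MeasureTheory.lintegral_prod _ hu_meas.aemeasurable]
      exact hu_fin
    have htens : MemLp (fun st : ℝ × ℝ => φ₂ st.1 * starRingEnd ℂ (φ₁ st.2)) 2
        ((volume : Measure ℝ).prod volume) := Stmt15.memℒp_prod_mul (Lp.memLp φ₂) hφ1c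
    have hint : ∀ᵐ θ ∂(volume : Measure (Fin n → ℝ)),
        Integrable (fun st : ℝ × ℝ =>
          (φ₂ st.1 * starRingEnd ℂ (φ₁ st.2)) * F (θ, st))
          ((volume : Measure ℝ).prod volume) := by
      filter_upwards [hslice] with θ hθ
      have hsliceL2 : MemLp (fun st : ℝ × ℝ => F (θ, st)) 2
          ((volume : Measure ℝ).prod volume) := by
        refine ⟨(hFm.comp measurable_prodMk_left).aestronglyMeasurable, ?_⟩
        rw [eLpNorm_eq_lintegral_rpow_enorm_toReal two_ne_zero ENNReal.ofNat_ne_top]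
        simp only [ENNReal.toReal_ofNat]
        exact ENNReal.rpow_lt_top_of_nonneg (by norm_num) hθ.ne
      have h := hsliceL2.smul htens
        (p := 2) (q := 2) (r := 1)
      exact memLp_one_iff_integrable.mp h
    filter_upwards [hint] with θ hI
    congr 1
    simp only [← Fin.cons_snoc_eq_snoc_cons]
    have hL : ∀ t : ℝ, starRingEnd ℂ (φ₁ t) * ∫ s : ℝ, φ₂ s * ψ (Fin.cons s (Fin.snoc θ t))
        = ∫ s : ℝ, starRingEnd ℂ (φ₁ t) * (φ₂ s * ψ (Fin.cons s (Fin.snoc θ t))) :=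
      fun t => (integral_const_mul _ _).symm
    simp only [hL]
    rw [integral_integral_swap]
    · have hR : ∀ s : ℝ,
          ∫ t : ℝ, starRingEnd ℂ (φ₁ t) * (φ₂ s * ψ (Fin.cons s (Fin.snoc θ t)))
            = φ₂ s * ∫ t : ℝ, starRingEnd ℂ (φ₁ t) * ψ (Fin.cons s (Fin.snoc θ t)) := by
        intro s
        rw [← integral_const_mul]
        exact integral_congr_ae (Filter.Eventually.of_forall fun t => by ring)
      simp only [hR]
    · refine (hI.swap).congr (Filter.Eventually.of_forall fun ts => ?_)
      simp only [Function.comp_apply, Function.uncurry, Prod.fst_swap, Prod.snd_swap, hFdef]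
      ring

end
end
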